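/- arXiv:1402.2202 — 10 statements merged into one kernel-verified Lean document; each statement's English description precedes it below -/
import Mathlib

section
/- The natural density of the set of squarefree integers in ℤ equals 1/ζ(2); precisely, the number of squarefree integers n with |n| ≤ R, divided by 2R, tends to 6/π² as R → ∞. -/
open Filter
open scoped Classical

open ArithmeticFunction
open scoped ArithmeticFunction.Moebius

theorem sqfree_aux_dvd {a b d : ℕ} (ha : Squarefree a) (hb : b ≠ 0)
    (h : d ^ 2 ∣ b ^ 2 * a) : d ∣ b := by
  have hd : d ≠ 0 := by
    rintro rfl
    rw [zero_pow two_ne_zero, zero_dvd_iff, mul_eq_zero] at h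
    rcases h with h | h
    · exact hb (by simpa using pow_eq_zero_iff two_ne_zero |>.mp h)
    · exact ha.ne_zero h
  have hba : b ^ 2 * a ≠ 0 := by
    have := ha.ne_zero; positivity
  rw [← Nat.factorization_le_iff_dvd hd hb]
  intro p
  have := (Nat.factorization_le_iff_dvd (pow_ne_zero 2 hd) hba).mpr h p
  simp [Nat.factorization_mul, Nat.factorization_pow, pow_ne_zero, hb, ha.ne_zero] at this
  have ha1 : a.factorization p ≤ 1 := ha.natFactorization_le_one p
  omega

theorem sqfree_aux_indicator {n : ℕ} (hn : 0 < n) :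
    ∑ d ∈ Finset.Icc 1 n, (if d ^ 2 ∣ n then (μ d : ℤ) else 0)
      = if Squarefree n then 1 else 0 := by
  obtain ⟨a, b, hab, ha⟩ := Nat.sq_mul_squarefree n
  have hb : b ≠ 0 := by rintro rfl; simp at hab; omega
  have hset : (Finset.Icc 1 n).filter (fun d => d ^ 2 ∣ n) = b.divisors := by
    ext d
    simp only [Finset.mem_filter, Finset.mem_Icc, Nat.mem_divisors]
    constructor
    · rintro ⟨⟨h1, h2⟩, h3⟩
      exact ⟨sqfree_aux_dvd ha hb (hab ▸ h3), hb⟩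
    · rintro ⟨hdb, -⟩
      have hd0 : d ≠ 0 := fun h => hb (by simpa [h] using hdb)
      refine ⟨⟨Nat.one_le_iff_ne_zero.mpr hd0, ?_⟩, ?_⟩
      · calc d ≤ b := Nat.le_of_dvd (Nat.pos_of_ne_zero hb) hdb
          _ ≤ b ^ 2 * a := by
            have : 1 ≤ a := ha.ne_zero.bot_lt
            calc b ≤ b ^ 2 := Nat.le_self_pow two_ne_zero b
              _ ≤ b ^ 2 * a := Nat.le_mul_of_pos_right _ this
          _ = n := hab
      · rw [← hab]
        exact dvd_mul_of_dvd_left (pow_dvd_pow_of_dvd hdb 2) a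
  rw [← Finset.sum_filter, hset]
  have hdiv : ∑ d ∈ b.divisors, (μ d : ℤ) = if b = 1 then 1 else 0 := by
    have := coe_mul_zeta_apply (f := (μ : ArithmeticFunction ℤ)) (x := b)
    rw [moebius_mul_coe_zeta] at this
    rw [← this, one_apply]
  rw [hdiv]
  congr 1
  have hsq : Squarefree n ↔ b = 1 := by
    constructor
    · intro hsn
      have : b * b ∣ n := by rw [← hab, ← pow_two]; exact Dvd.intro a rfl
      exact Nat.isUnit_iff.mp (hsn b this)
    · rintro rfl
      rw [← hab]; simpa using ha
  simp [hsq]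

theorem sqfree_aux_count (N : ℕ) :
    (((Finset.Icc 1 N).filter (fun n => Squarefree n)).card : ℤ)
      = ∑ d ∈ Finset.Icc 1 N, (μ d : ℤ) * (N / d ^ 2 : ℕ) := by
  have h1 : (((Finset.Icc 1 N).filter (fun n => Squarefree n)).card : ℤ)
      = ∑ n ∈ Finset.Icc 1 N, (if Squarefree n then (1 : ℤ) else 0) := by
    rw [Finset.sum_boole, Nat.cast_inj]
  rw [h1]
  have h2 : ∀ n ∈ Finset.Icc 1 N, (if Squarefree n then (1 : ℤ) else 0)
      = ∑ d ∈ Finset.Icc 1 N, (if d ^ 2 ∣ n then (μ d : ℤ) else 0) := by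
    intro n hn
    rw [Finset.mem_Icc] at hn
    rw [← sqfree_aux_indicator (by omega : 0 < n)]
    refine Finset.sum_subset (Finset.Icc_subset_Icc_right hn.2) ?_
    intro d hd hd'
    rw [Finset.mem_Icc] at hd hd'
    rw [if_neg]
    intro hdvd
    have : d ^ 2 ≤ n := Nat.le_of_dvd (by omega) hdvd
    have h3 : d ≤ d ^ 2 := Nat.le_self_pow two_ne_zero d
    omega
  rw [Finset.sum_congr rfl h2, Finset.sum_comm]
  refine Finset.sum_congr rfl fun d hd => ?_
  rw [← Finset.sum_filter]
  rw [Finset.sum_const, show Finset.Icc 1 N = Finset.Ioc 0 N from (Finset.Icc_add_one_left_eq_Ioc (a := 0) (b := N)),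
    Nat.Ioc_filter_dvd_card_eq_div N (d ^ 2), nsmul_eq_mul, mul_comm]

theorem sqfree_aux_tendsto_div {k : ℕ} (hk : 0 < k) :
    Tendsto (fun N : ℕ => ((N / k : ℕ) : ℝ) / N) atTop (nhds (1 / k)) := by
  have hk' : (0:ℝ) < k := by exact_mod_cast hk
  have heq : ∀ᶠ N : ℕ in atTop,
      1/(k:ℝ) - ((N % k : ℕ) : ℝ)/(k * N) = ((N / k : ℕ) : ℝ) / N := by
    filter_upwards [eventually_ge_atTop 1] with N hN
    have hN' : (0:ℝ) < N := by exact_mod_cast hN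
    have h1 : ((N:ℝ)) = k * ((N/k : ℕ):ℝ) + ((N % k : ℕ):ℝ) := by
      exact_mod_cast (Nat.div_add_mod N k).symm
    field_simp
    linear_combination h1
  have hrem : Tendsto (fun N : ℕ => ((N % k : ℕ) : ℝ)/(k * N)) atTop (nhds 0) := by
    apply squeeze_zero' (g := fun N : ℕ => (1:ℝ)/N)
    · filter_upwards with N; positivity
    · filter_upwards [eventually_ge_atTop 1] with N hN
      have hN' : (0:ℝ) < N := by exact_mod_cast hN
      have h2 : ((N % k : ℕ):ℝ) ≤ k := by exact_mod_cast (Nat.mod_lt N hk).le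
      rw [div_le_div_iff₀ (by positivity) hN']
      calc ((N % k : ℕ):ℝ) * N ≤ k * N := by nlinarith
        _ = 1 * (k * N) := by ring
    · exact tendsto_one_div_atTop_nhds_zero_nat
  have := (tendsto_const_nhds (x := 1/(k:ℝ)) (f := atTop)).sub hrem
  rw [sub_zero] at this
  exact this.congr' heq

theorem sqfree_aux_limit :
    Tendsto (fun N : ℕ => (((Finset.Icc 1 N).filter (fun n => Squarefree n)).card : ℝ) / N)
      atTop (nhds (∑' d : ℕ, (μ d : ℝ) / (d : ℝ) ^ 2)) := by
  have hQ : ∀ N : ℕ, (((Finset.Icc 1 N).filter (fun n => Squarefree n)).card : ℝ) / N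
      = ∑' d : ℕ, (μ d : ℝ) * ((N / d ^ 2 : ℕ) : ℝ) / N := by
    intro N
    rw [tsum_eq_sum (s := Finset.Icc 1 N) ?_]
    · have := sqfree_aux_count N
      have h2 : (((Finset.Icc 1 N).filter (fun n => Squarefree n)).card : ℝ)
          = ∑ d ∈ Finset.Icc 1 N, (μ d : ℝ) * ((N / d ^ 2 : ℕ) : ℝ) := by
        have h3 := congrArg (Int.cast : ℤ → ℝ) this
        push_cast at h3
        exact h3
      rw [h2, Finset.sum_div]
    · intro d hd
      rw [Finset.mem_Icc, not_and_or] at hd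
      rcases hd with hd | hd
      · have : d = 0 := by omega
        simp [this]
      · have hdN : N < d := by omega
        have : N / d ^ 2 = 0 := Nat.div_eq_of_lt (by nlinarith)
        simp [this]
  simp only [hQ]
  apply tendsto_tsum_of_dominated_convergence (bound := fun d : ℕ => 1 / (d : ℝ) ^ 2)
  · exact (Real.summable_one_div_nat_pow).mpr one_lt_two
  · intro d
    rcases Nat.eq_zero_or_pos d with rfl | hd
    · simpa using tendsto_const_nhds
    · have h := sqfree_aux_tendsto_div (k := d ^ 2) (by positivity)
      have := h.const_mul ((μ d : ℝ))
      simp only [mul_one_div] at this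
      rw [show ((d ^ 2 : ℕ) : ℝ) = (d : ℝ) ^ 2 by push_cast; ring] at this
      refine this.congr fun N => ?_
      rw [mul_div_assoc]
  · filter_upwards with N
    intro d
    rcases Nat.eq_zero_or_pos d with rfl | hd
    · simp
    have h1 : |((μ d : ℤ) : ℝ)| ≤ 1 := by
      exact_mod_cast abs_moebius_le_one (n := d)
    have h2 : ((N / d ^ 2 : ℕ) : ℝ) / N ≤ 1 / (d : ℝ) ^ 2 := by
      rcases Nat.eq_zero_or_pos N with rfl | hN
      · simp
      have hN' : (0:ℝ) < N := by exact_mod_cast hN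
      have hdd : (0:ℝ) < (d:ℝ) ^ 2 := by positivity
      rw [div_le_div_iff₀ hN' hdd]
      have : ((N / d ^ 2 : ℕ) : ℝ) * (d:ℝ)^2 ≤ N := by
        exact_mod_cast Nat.div_mul_le_self N (d ^ 2)
      calc ((N / d ^ 2 : ℕ) : ℝ) * (d:ℝ)^2 ≤ N := this
        _ = 1 * N := (one_mul _).symm
    calc ‖(μ d : ℝ) * ((N / d ^ 2 : ℕ) : ℝ) / N‖
        = |((μ d : ℤ) : ℝ)| * (((N / d ^ 2 : ℕ) : ℝ) / N) := by
          rw [Real.norm_eq_abs, mul_div_assoc, abs_mul, abs_div,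
            abs_of_nonneg (by positivity : (0:ℝ) ≤ ((N / d ^ 2 : ℕ) : ℝ)),
            abs_of_nonneg (by positivity : (0:ℝ) ≤ (N:ℝ))]
      _ ≤ 1 * (1 / (d:ℝ)^2) := by
          apply mul_le_mul h1 h2 (by positivity) zero_le_one
      _ = 1 / (d:ℝ)^2 := one_mul _

theorem sqfree_aux_value : (∑' d : ℕ, ((μ d : ℝ)) / (d : ℝ) ^ 2) = 6 / Real.pi ^ 2 := by
  have hre : (1 : ℝ) < (2 : ℂ).re := by norm_num
  have hmul := LSeries_zeta_mul_Lseries_moebius (s := 2) hre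
  rw [LSeries_zeta_eq_riemannZeta hre, riemannZeta_two] at hmul
  have hL : LSeries (fun n => (μ n : ℂ)) 2 = 6 / (Real.pi : ℂ) ^ 2 := by
    have hpi : (Real.pi : ℂ) ≠ 0 := by
      exact_mod_cast Real.pi_ne_zero
    field_simp at hmul ⊢
    linear_combination hmul
  have hterm : ∀ n : ℕ, LSeries.term (fun n => (μ n : ℂ)) 2 n
      = ((μ n : ℝ) / (n : ℝ) ^ 2 : ℝ) := by
    intro n
    rcases Nat.eq_zero_or_pos n with rfl | hn
    · simp [LSeries.term]
    · rw [LSeries.term_def, if_neg hn.ne']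
      rw [show ((2 : ℂ)) = ((2 : ℕ) : ℂ) by norm_num, Complex.cpow_natCast]
      push_cast
      ring
  have : ((∑' d : ℕ, ((μ d : ℝ)) / (d : ℝ) ^ 2 : ℝ) : ℂ) = ((6 / Real.pi ^ 2 : ℝ) : ℂ) := by
    rw [Complex.ofReal_tsum,
      show ((6 / Real.pi ^ 2 : ℝ) : ℂ) = 6 / (Real.pi : ℂ) ^ 2 by push_cast; ring,
      ← hL, LSeries]
    exact tsum_congr fun n => (hterm n).symm
  exact_mod_cast this

theorem sqfree_aux_symm (R : ℕ) :
    ((Finset.Icc (-(R : ℤ)) (R : ℤ)).filter (fun n => Squarefree n)).card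
      = 2 * ((Finset.Icc 1 R).filter (fun n : ℕ => Squarefree n)).card := by
  have hsplit : Finset.Icc (-(R : ℤ)) (R : ℤ)
      = Finset.Icc (-(R : ℤ)) (-1) ∪ Finset.Icc 0 (R : ℤ) := by
    ext n; simp only [Finset.mem_Icc, Finset.mem_union]; omega
  have hdisj : Disjoint ((Finset.Icc (-(R : ℤ)) (-1)).filter (fun n => Squarefree n))
      ((Finset.Icc 0 (R : ℤ)).filter (fun n => Squarefree n)) := by
    rw [Finset.disjoint_left]
    intro n hn hn'
    simp only [Finset.mem_filter, Finset.mem_Icc] at hn hn'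
    omega
  rw [hsplit, Finset.filter_union, Finset.card_union_of_disjoint hdisj]
  have epos : ((Finset.Icc (0 : ℤ) (R : ℤ)).filter (fun n => Squarefree n)).card
      = ((Finset.Icc 1 R).filter (fun n : ℕ => Squarefree n)).card := by
    apply Finset.card_bij (fun n _ => n.natAbs)
    · intro n hn
      simp only [Finset.mem_filter, Finset.mem_Icc] at hn ⊢
      have h0 : n ≠ 0 := fun h => (by simpa [h] using hn.2 : False)
      refine ⟨⟨?_, ?_⟩, Int.squarefree_natAbs.mpr hn.2⟩
      · omega
      · omega
    · intro a ha b hb hab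
      simp only [Finset.mem_filter, Finset.mem_Icc] at ha hb
      omega
    · intro m hm
      simp only [Finset.mem_filter, Finset.mem_Icc] at hm
      refine ⟨(m : ℤ), ?_, by simp⟩
      simp only [Finset.mem_filter, Finset.mem_Icc]
      refine ⟨⟨by positivity, by exact_mod_cast hm.1.2⟩, ?_⟩
      rw [← Int.squarefree_natAbs]
      simpa using hm.2
  have eneg : ((Finset.Icc (-(R : ℤ)) (-1)).filter (fun n => Squarefree n)).card
      = ((Finset.Icc 1 R).filter (fun n : ℕ => Squarefree n)).card := by
    apply Finset.card_bij (fun n _ => n.natAbs)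
    · intro n hn
      simp only [Finset.mem_filter, Finset.mem_Icc] at hn ⊢
      refine ⟨⟨by omega, by omega⟩, Int.squarefree_natAbs.mpr hn.2⟩
    · intro a ha b hb hab
      simp only [Finset.mem_filter, Finset.mem_Icc] at ha hb
      omega
    · intro m hm
      simp only [Finset.mem_filter, Finset.mem_Icc] at hm
      refine ⟨-(m : ℤ), ?_, by simp⟩
      simp only [Finset.mem_filter, Finset.mem_Icc]
      refine ⟨⟨by omega, by omega⟩, ?_⟩
      rw [← Int.squarefree_natAbs]
      simpa using hm.2
  rw [epos, eneg]; ring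

/-- The natural density of the squarefree integers equals 1/ζ(2) = 6/π². -/

theorem squarefree_integers_density :
    Tendsto
      (fun R : ℕ =>
        (((Finset.Icc (-(R : ℤ)) (R : ℤ)).filter (fun n => Squarefree n)).card : ℝ)
          / (2 * R))
      atTop (nhds (6 / Real.pi ^ 2)) := by
  have key := sqfree_aux_limit
  rw [sqfree_aux_value] at key
  refine key.congr fun R => ?_
  rw [sqfree_aux_symm R]
  push_cast
  rw [mul_div_mul_left _ _ (two_ne_zero)]
end

section
/- The natural density of the set of k-free integers equals 1/ζ(k) for every integer k ≥ 2; precisely, |{n ∈ ℕ : n ≤ R, n is k-free}|/R → 1/ζ(k) as R → ∞. -/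
open Filter
open scoped Classical

open Finset ArithmeticFunction in
private lemma sqf_prod_primes {s : Finset ℕ} (h : ∀ p ∈ s, p.Prime) :
    Squarefree (∏ p ∈ s, p) := by
  classical
  induction s using Finset.induction with
  | empty => simpa using squarefree_one
  | @insert p s hp ih =>
    rw [Finset.prod_insert hp]
    have hpp := h p (Finset.mem_insert_self p s)
    have hs : ∀ q ∈ s, Nat.Prime q := fun q hq => h q (Finset.mem_insert_of_mem hq)
    have hcop : Nat.Coprime p (∏ q ∈ s, q) := by
      rw [Nat.Prime.coprime_iff_not_dvd hpp, hpp.prime.dvd_finset_prod_iff (fun q : ℕ => q)]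
      rintro ⟨q, hq, hpq⟩
      exact hp (((hs q hq).dvd_iff_eq hpp.ne_one).mp hpq ▸ hq)
    exact (Nat.squarefree_mul hcop).mpr ⟨hpp.squarefree, ih hs⟩

open Finset ArithmeticFunction ArithmeticFunction.Moebius ArithmeticFunction.zeta in
private lemma moebius_sum_kfree {k : ℕ} (hk : 2 ≤ k) {n : ℕ} (hn : n ≠ 0) :
    (∑ d ∈ n.divisors.filter (fun d => d ^ k ∣ n), μ d)
      = if (∀ p : ℕ, p.Prime → ¬ p ^ k ∣ n) then 1 else 0 := by
  have hk0 : k ≠ 0 := by omega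
  set t : Finset ℕ := n.primeFactors.filter (fun p => p ^ k ∣ n) with ht
  have htp : ∀ p ∈ t, p.Prime := fun p hp =>
    Nat.prime_of_mem_primeFactors (Finset.mem_filter.mp hp).1
  set r : ℕ := ∏ p ∈ t, p with hr
  have hrsqf : Squarefree r := sqf_prod_primes htp
  have hrn : r ∣ n :=
    (Finset.prod_dvd_prod_of_subset _ _ _ (Finset.filter_subset _ _)).trans
      (Nat.prod_primeFactors_dvd n)
  have hr0 : r ≠ 0 := hrsqf.ne_zero
  -- membership in r.divisors for d with d^k ∣ n, squarefree
  have hsub : r.divisors ⊆ n.divisors.filter (fun d => d ^ k ∣ n) := by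
    intro d hd
    rw [Nat.mem_divisors] at hd
    have hdsqf : Squarefree d := hrsqf.squarefree_of_dvd hd.1
    have hdk : d ^ k ∣ n := by
      have hd0 : d ≠ 0 := hdsqf.ne_zero
      rw [← Nat.factorization_le_iff_dvd (pow_ne_zero _ hd0) hn]
      intro p
      rw [Nat.factorization_pow, Finsupp.smul_apply, smul_eq_mul]
      rcases Nat.eq_zero_or_pos (d.factorization p) with h0 | h1
      · simp [h0]
      · have hpmem : p ∈ d.primeFactors := by
          rw [← Nat.support_factorization]
          exact Finsupp.mem_support_iff.mpr (by omega)
        have hple : d.factorization p ≤ 1 := hdsqf.natFactorization_le_one p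
        have hpp : p.Prime := Nat.prime_of_mem_primeFactors hpmem
        have hpd : p ∣ d := Nat.dvd_of_mem_primeFactors hpmem
        have hpt : p ∈ t := by
          have : p ∣ r := hpd.trans hd.1
          rw [hr] at this
          rw [hpp.prime.dvd_finset_prod_iff (fun q : ℕ => q)] at this
          obtain ⟨q, hq, hpq⟩ := this
          exact ((htp q hq).dvd_iff_eq hpp.ne_one).mp hpq ▸ hq
        have : p ^ k ∣ n := (Finset.mem_filter.mp hpt).2
        have := (Nat.Prime.pow_dvd_iff_le_factorization hpp hn).mp this
        calc k * d.factorization p ≤ k * 1 := Nat.mul_le_mul_left k hple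
          _ = k := mul_one k
          _ ≤ n.factorization p := this
    exact Finset.mem_filter.mpr ⟨Nat.mem_divisors.mpr ⟨hd.1.trans hrn, hn⟩, hdk⟩
  have hzero : ∀ d ∈ n.divisors.filter (fun d => d ^ k ∣ n), d ∉ r.divisors → μ d = 0 := by
    intro d hd hdr
    by_contra hμ
    have hdsqf : Squarefree d := moebius_ne_zero_iff_squarefree.mp hμ
    apply hdr
    rw [Finset.mem_filter, Nat.mem_divisors] at hd
    -- show d ∣ r
    have hdprim : d.primeFactors ⊆ t := by
      intro p hp
      have hpp := Nat.prime_of_mem_primeFactors hp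
      have hpd := Nat.dvd_of_mem_primeFactors hp
      have hpk : p ^ k ∣ n := (pow_dvd_pow_of_dvd hpd k).trans hd.2
      have hpn : p ∣ n := (dvd_pow_self p hk0).trans hpk
      exact Finset.mem_filter.mpr ⟨Nat.mem_primeFactors.mpr ⟨hpp, hpn, hn⟩, hpk⟩
    have hdvd : d ∣ r := by
      have := Finset.prod_dvd_prod_of_subset _ _ (fun p : ℕ => p) hdprim
      rwa [Nat.prod_primeFactors_of_squarefree hdsqf] at this
    exact Nat.mem_divisors.mpr ⟨hdvd, hr0⟩
  rw [← Finset.sum_subset hsub hzero]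
  have hsum : (∑ d ∈ r.divisors, μ d) = if r = 1 then 1 else 0 := by
    have h1 : (μ * (ζ : ArithmeticFunction ℤ)) r = (1 : ArithmeticFunction ℤ) r := by
      rw [moebius_mul_coe_zeta]
    rwa [coe_mul_zeta_apply, one_apply] at h1
  rw [hsum]
  congr 1
  rw [eq_iff_iff]
  constructor
  · intro hr1
    intro p hp hpk
    have hpt : p ∈ t := Finset.mem_filter.mpr
      ⟨Nat.mem_primeFactors.mpr ⟨hp, (dvd_pow_self p hk0).trans hpk, hn⟩, hpk⟩
    have : t = ∅ := by
      have := Nat.primeFactors_prod htp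
      rw [← hr, hr1] at this
      simpa using this.symm
    simp [this] at hpt
  · intro h
    have : t = ∅ := by
      rw [Finset.filter_eq_empty_iff]
      intro p hp
      exact h p (Nat.prime_of_mem_primeFactors hp)
    rw [hr, this, Finset.prod_empty]

open Finset ArithmeticFunction ArithmeticFunction.Moebius in
private lemma count_kfree {k : ℕ} (hk : 2 ≤ k) (R : ℕ) :
    (((Finset.Icc 1 R).filter (fun n => ∀ p : ℕ, p.Prime → ¬ p ^ k ∣ n)).card : ℤ)
      = ∑ d ∈ Finset.Icc 1 R, μ d * ((R / d ^ k : ℕ) : ℤ) := by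
  have hk0 : k ≠ 0 := by omega
  have hIcc : Finset.Icc 1 R = Finset.Ioc 0 R := rfl
  symm
  calc (∑ d ∈ Finset.Icc 1 R, μ d * ((R / d ^ k : ℕ) : ℤ))
      = ∑ d ∈ Finset.Icc 1 R,
          μ d * (((Finset.Icc 1 R).filter (fun n => d ^ k ∣ n)).card : ℤ) := by
        refine Finset.sum_congr rfl fun d _ => ?_
        rw [hIcc, Nat.Ioc_filter_dvd_card_eq_div]
    _ = ∑ d ∈ Finset.Icc 1 R, ∑ n ∈ Finset.Icc 1 R, if d ^ k ∣ n then μ d else 0 := by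
        refine Finset.sum_congr rfl fun d _ => ?_
        rw [← Finset.sum_filter, Finset.sum_const, nsmul_eq_mul, mul_comm]
    _ = ∑ n ∈ Finset.Icc 1 R, ∑ d ∈ Finset.Icc 1 R, if d ^ k ∣ n then μ d else 0 :=
        Finset.sum_comm
    _ = ∑ n ∈ Finset.Icc 1 R, ∑ d ∈ n.divisors.filter (fun d => d ^ k ∣ n), μ d := by
        refine Finset.sum_congr rfl fun n hn => ?_
        rw [Finset.mem_Icc] at hn
        rw [← Finset.sum_filter]
        congr 1
        ext d
        simp only [Finset.mem_filter, Finset.mem_Icc, Nat.mem_divisors]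
        constructor
        · rintro ⟨⟨h1, h2⟩, hd⟩
          exact ⟨⟨(dvd_pow_self d hk0).trans hd, by omega⟩, hd⟩
        · rintro ⟨⟨hdvd, hne⟩, hd⟩
          have hd0 : 0 < d := Nat.pos_of_dvd_of_pos hdvd (by omega)
          exact ⟨⟨hd0, (Nat.le_of_dvd (by omega) hdvd).trans hn.2⟩, hd⟩
    _ = ∑ n ∈ Finset.Icc 1 R,
          (if (∀ p : ℕ, p.Prime → ¬ p ^ k ∣ n) then 1 else 0 : ℤ) := by
        refine Finset.sum_congr rfl fun n hn => ?_
        rw [Finset.mem_Icc] at hn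
        exact moebius_sum_kfree hk (by omega)
    _ = (((Finset.Icc 1 R).filter (fun n => ∀ p : ℕ, p.Prime → ¬ p ^ k ∣ n)).card : ℤ) := by
        rw [Finset.card_filter]
        push_cast
        rfl

private lemma nat_div_tendsto (m : ℕ) (hm : 1 ≤ m) :
    Tendsto (fun R : ℕ => ((R / m : ℕ) : ℝ) / (R : ℝ)) atTop (nhds (1 / (m : ℝ))) := by
  have hm0 : (0 : ℝ) < m := by exact_mod_cast hm
  rw [tendsto_iff_norm_sub_tendsto_zero]
  apply squeeze_zero_norm' (a := fun R : ℕ => 1 / (R : ℝ))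
  · filter_upwards [eventually_ge_atTop 1] with R hR
    have hR0 : (0 : ℝ) < R := by exact_mod_cast hR
    have h1 : (m : ℝ) * ((R / m : ℕ) : ℝ) ≤ R := by
      exact_mod_cast Nat.mul_div_le R m
    have h2 : (R : ℝ) ≤ m * ((R / m : ℕ) : ℝ) + m := by
      have h3 := Nat.div_add_mod R m
      have h4 := Nat.mod_lt R (show 0 < m by omega)
      have h5 : R ≤ m * (R / m) + m := by omega
      exact_mod_cast h5
    rw [norm_norm, Real.norm_eq_abs, abs_le]
    constructor
    · rw [div_sub_div _ _ (ne_of_gt hR0) (ne_of_gt hm0), neg_le, ← neg_div,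
        div_le_div_iff₀ (by positivity) hR0]
      nlinarith
    · rw [div_sub_div _ _ (ne_of_gt hR0) (ne_of_gt hm0),
        div_le_div_iff₀ (by positivity) hR0]
      nlinarith
  · exact tendsto_one_div_atTop_nhds_zero_nat

/-- The natural density of the k-free integers equals 1/ζ(k) for k ≥ 2. -/

theorem kfree_density (k : ℕ) (hk : 2 ≤ k) :
    Tendsto
      (fun R : ℕ =>
        ((((Finset.Icc 1 R).filter
            (fun n => ∀ p : ℕ, p.Prime → ¬ p ^ k ∣ n)).card : ℂ) / (R : ℂ)))
      atTop (nhds (1 / riemannZeta (k : ℂ))) := by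
  have hk0 : k ≠ 0 := by omega
  have hk1 : 1 < ((k : ℂ)).re := by
    simp only [Complex.natCast_re]
    exact_mod_cast lt_of_lt_of_le one_lt_two hk
  have hζ := riemannZeta_ne_zero_of_one_lt_re hk1
  set μ := ArithmeticFunction.moebius with hμ
  set f : ℕ → ℕ → ℂ := fun R d =>
    if d = 0 then 0 else ((μ d : ℤ) : ℂ) * ((R / d ^ k : ℕ) : ℂ) / (R : ℂ) with hf
  set g : ℕ → ℂ := LSeries.term (fun n => ((μ n : ℤ) : ℂ)) (k : ℂ) with hg
  -- identify the limit
  have hLval : (∑' d : ℕ, g d) = 1 / riemannZeta (k : ℂ) := by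
    have h1 := ArithmeticFunction.LSeries_zeta_mul_Lseries_moebius hk1
    rw [ArithmeticFunction.LSeries_zeta_eq_riemannZeta hk1] at h1
    rw [eq_div_iff hζ, mul_comm]
    exact h1
  -- dominated convergence
  have hμ1 : ∀ d : ℕ, ‖((μ d : ℤ) : ℂ)‖ ≤ 1 := by
    intro d
    rcases ArithmeticFunction.moebius_eq_or d with h | h | h <;> simp [hμ ▸ h]
  have hbound : ∀ (R d : ℕ), ‖f R d‖ ≤ 1 / (d : ℝ) ^ k := by
    intro R d
    rcases eq_or_ne d 0 with rfl | hd0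
    · simp [hf, zero_pow hk0]
    have hdk : (0 : ℝ) < (d : ℝ) ^ k := by
      have : 0 < d := Nat.pos_of_ne_zero hd0
      positivity
    have key : ((R / d ^ k : ℕ) : ℝ) / (R : ℝ) ≤ 1 / (d : ℝ) ^ k := by
      rcases eq_or_ne R 0 with rfl | hR0
      · simp
      have hRpos : (0 : ℝ) < R := by
        have : 0 < R := Nat.pos_of_ne_zero hR0
        exact_mod_cast this
      have h1 : ((R / d ^ k : ℕ) : ℝ) ≤ (R : ℝ) / (d : ℝ) ^ k := by
        have := Nat.cast_div_le (α := ℝ) (m := R) (n := d ^ k)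
        rwa [Nat.cast_pow] at this
      calc ((R / d ^ k : ℕ) : ℝ) / (R : ℝ) ≤ ((R : ℝ) / (d : ℝ) ^ k) / (R : ℝ) := by gcongr
        _ = 1 / (d : ℝ) ^ k := by
            field_simp
    have : ‖f R d‖ = ‖((μ d : ℤ) : ℂ)‖ * (((R / d ^ k : ℕ) : ℝ) / (R : ℝ)) := by
      rw [hf]
      simp only [if_neg hd0]
      rw [norm_div, norm_mul, Complex.norm_natCast, Complex.norm_natCast, mul_div_assoc]
    rw [this]
    calc ‖((μ d : ℤ) : ℂ)‖ * (((R / d ^ k : ℕ) : ℝ) / (R : ℝ))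
        ≤ 1 * (1 / (d : ℝ) ^ k) := by
          apply mul_le_mul (hμ1 d) key (by positivity) zero_le_one
      _ = 1 / (d : ℝ) ^ k := one_mul _
  have hab : ∀ d : ℕ, Tendsto (fun R => f R d) atTop (nhds (g d)) := by
    intro d
    rcases eq_or_ne d 0 with rfl | hd0
    · simpa [hf, hg, LSeries.term_zero] using tendsto_const_nhds (α := ℂ) (f := atTop (α := ℕ))
    have hdk1 : 1 ≤ d ^ k := Nat.one_le_iff_ne_zero.mpr (pow_ne_zero _ hd0)
    have h1 := nat_div_tendsto (d ^ k) hdk1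
    have h2 : Tendsto (fun R : ℕ => Complex.ofReal (((R / d ^ k : ℕ) : ℝ) / (R : ℝ))) atTop
        (nhds (Complex.ofReal (1 / ((d ^ k : ℕ) : ℝ)))) :=
      (Complex.continuous_ofReal.tendsto _).comp h1
    have e1 : Complex.ofReal (1 / ((d ^ k : ℕ) : ℝ)) = 1 / ((d : ℂ)) ^ k := by
      push_cast
      ring
    rw [e1] at h2
    have h3 : Tendsto (fun R : ℕ => ((R / d ^ k : ℕ) : ℂ) / (R : ℂ)) atTop
        (nhds (1 / ((d : ℂ)) ^ k)) := by
      refine h2.congr fun R => ?_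
      push_cast
      ring
    have h4 := h3.const_mul ((μ d : ℤ) : ℂ)
    have hgd : g d = ((μ d : ℤ) : ℂ) * (1 / ((d : ℂ)) ^ k) := by
      rw [hg, LSeries.term_of_ne_zero hd0, Complex.cpow_natCast, mul_one_div]
    rw [hgd]
    refine h4.congr fun R => ?_
    rw [hf]
    simp only [if_neg hd0]
    ring
  -- put everything together
  have main := tendsto_tsum_of_dominated_convergence (f := f) (g := g)
    (bound := fun d => 1 / (d : ℝ) ^ k)
    (Real.summable_one_div_nat_pow.mpr (by omega)) hab (Eventually.of_forall hbound)
  rw [hLval] at main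
  refine main.congr' ?_
  filter_upwards [eventually_ge_atTop 1] with R hR
  have hts : (∑' d, f R d) = ∑ d ∈ Finset.Icc 1 R, f R d := by
    apply tsum_eq_sum
    intro d hd
    rw [Finset.mem_Icc] at hd
    push_neg at hd
    rcases eq_or_ne d 0 with rfl | hd0
    · simp [hf]
    · have hdR : R < d := hd (Nat.one_le_iff_ne_zero.mpr hd0)
      have hlt : R < d ^ k := lt_of_lt_of_le hdR (Nat.le_self_pow hk0 d)
      simp [hf, if_neg hd0, Nat.div_eq_of_lt hlt]
  rw [hts]
  have hc := count_kfree hk R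
  calc (∑ d ∈ Finset.Icc 1 R, f R d)
      = ∑ d ∈ Finset.Icc 1 R, ((μ d : ℤ) : ℂ) * ((R / d ^ k : ℕ) : ℂ) / (R : ℂ) := by
        refine Finset.sum_congr rfl fun d hd => ?_
        rw [Finset.mem_Icc] at hd
        rw [hf]
        simp only [if_neg (by omega : d ≠ 0)]
    _ = (∑ d ∈ Finset.Icc 1 R, ((μ d : ℤ) : ℂ) * ((R / d ^ k : ℕ) : ℂ)) / (R : ℂ) :=
        (Finset.sum_div _ _ _).symm
    _ = ((((Finset.Icc 1 R).filter
            (fun n => ∀ p : ℕ, p.Prime → ¬ p ^ k ∣ n)).card : ℂ)) / (R : ℂ) := by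
        congr 1
        have h6 := congrArg (fun z : ℤ => (z : ℂ)) hc
        simp only [Int.cast_sum, Int.cast_mul, Int.cast_natCast] at h6
        exact h6.symm
end

section
/- The set of visible points of ℤ² contains arbitrarily large square holes: for every N there exists t ∈ ℤ² such that no point of t + {0,…,N}² is visible. -/
/-- The visible points of ℤ² contain arbitrarily large square holes. -/
theorem visible_points_arbitrarily_large_holes (N : ℕ) :
    ∃ t : ℤ × ℤ, ∀ i j : ℕ, i ≤ N → j ≤ N →
      Int.gcd (t.1 + (i : ℤ)) (t.2 + (j : ℤ)) ≠ 1 := by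
  set ι := Fin (N+1) × Fin (N+1)
  set q : ι → ℕ := fun ij => Nat.nth Nat.Prime (ij.1.val * (N+1) + ij.2.val) with hq
  have hqprime : ∀ ij : ι, Nat.Prime (q ij) := fun ij =>
    Nat.prime_nth_prime _
  have hqinj : Function.Injective q := by
    intro a b hab
    have hnth : Function.Injective (Nat.nth Nat.Prime) :=
      (Nat.nth_injective Nat.infinite_setOf_prime)
    have := hnth hab
    have h1 : a.1.val * (N+1) + a.2.val = b.1.val * (N+1) + b.2.val := this
    have ha2 := a.2.isLt
    have hb2 := b.2.isLt
    have h1' : a.2.val + a.1.val * (N+1) = b.2.val + b.1.val * (N+1) := by omega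
    have d1 : (a.2.val + a.1.val * (N+1)) / (N+1) = a.2.val / (N+1) + a.1.val :=
      Nat.add_mul_div_right _ _ (Nat.succ_pos N)
    have d2 : (b.2.val + b.1.val * (N+1)) / (N+1) = b.2.val / (N+1) + b.1.val :=
      Nat.add_mul_div_right _ _ (Nat.succ_pos N)
    have e1 : a.2.val / (N+1) = 0 := Nat.div_eq_of_lt ha2
    have e2 : b.2.val / (N+1) = 0 := Nat.div_eq_of_lt hb2
    have h2 : a.1.val = b.1.val ∧ a.2.val = b.2.val := by
      constructor
      · rw [h1'] at d1; omega
      · have : a.1.val = b.1.val := by rw [h1'] at d1; omega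
        nlinarith
    exact Prod.ext (Fin.ext h2.1) (Fin.ext h2.2)
  have hqne : ∀ ij ∈ (Finset.univ : Finset ι), q ij ≠ 0 := fun ij _ =>
    (hqprime ij).ne_zero
  have hpp : Set.Pairwise (Finset.univ : Finset ι) (Function.onFun Nat.Coprime q) := by
    intro a _ b _ hab
    exact (Nat.coprime_primes (hqprime a) (hqprime b)).mpr (fun h => hab (hqinj h))
  have hqbig : ∀ ij : ι, ij.1.val < q ij * (N+1) ∧ ij.2.val < q ij * (N+1) := by
    intro ij
    have h2 : 2 ≤ q ij := (hqprime ij).two_le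
    have : ij.1.val < N + 1 := ij.1.isLt
    have : ij.2.val < N + 1 := ij.2.isLt
    constructor <;> nlinarith [ij.1.isLt, ij.2.isLt]
  set a₁ : ι → ℕ := fun ij => q ij * (N+1) - ij.1.val with ha₁
  set a₂ : ι → ℕ := fun ij => q ij * (N+1) - ij.2.val with ha₂
  obtain ⟨x, hx⟩ := Nat.chineseRemainderOfFinset a₁ q Finset.univ hqne hpp
  obtain ⟨y, hy⟩ := Nat.chineseRemainderOfFinset a₂ q Finset.univ hqne hpp
  refine ⟨((x : ℤ), (y : ℤ)), fun i j hi hj => ?_⟩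
  set ij : ι := (⟨i, by omega⟩, ⟨j, by omega⟩)
  have hdx : q ij ∣ x + i := by
    have h := hx ij (Finset.mem_univ ij)
    have : x + i ≡ a₁ ij + i [MOD q ij] := h.add_right i
    have heq : a₁ ij + i = q ij * (N+1) := by
      simp only [ha₁]
      have := (hqbig ij).1
      simp only [ij] at this ⊢
      omega
    rw [heq] at this
    have : (x + i) % q ij = 0 := by
      have h0 : q ij * (N+1) % q ij = 0 := Nat.mul_mod_right _ _
      unfold Nat.ModEq at this
      omega
    exact Nat.dvd_of_mod_eq_zero this
  have hdy : q ij ∣ y + j := by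
    have h := hy ij (Finset.mem_univ ij)
    have : y + j ≡ a₂ ij + j [MOD q ij] := h.add_right j
    have heq : a₂ ij + j = q ij * (N+1) := by
      simp only [ha₂]
      have := (hqbig ij).2
      simp only [ij] at this ⊢
      omega
    rw [heq] at this
    have : (y + j) % q ij = 0 := by
      have h0 : q ij * (N+1) % q ij = 0 := Nat.mul_mod_right _ _
      unfold Nat.ModEq at this
      omega
    exact Nat.dvd_of_mod_eq_zero this
  have hgcd : Int.gcd ((x:ℤ) + (i:ℤ)) ((y:ℤ) + (j:ℤ)) = Nat.gcd (x + i) (y + j) := by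
    exact_mod_cast Int.gcd_natCast_natCast (x+i) (y+j)
  simp only [hgcd]
  intro h1
  have := Nat.dvd_gcd hdx hdy
  rw [h1] at this
  exact Nat.Prime.one_lt (hqprime ij) |>.ne' (Nat.eq_one_of_dvd_one this ▸ rfl)
end

section
/- The set V of visible points of ℤ² is non-periodic: if t ∈ ℤ² satisfies t + V = V, then t = 0. -/
/-- The set of visible points of ℤ² is non-periodic. -/
theorem visible_points_nonperiodic (t : ℤ × ℤ)
    (h : (fun v : ℤ × ℤ => t + v) '' {v : ℤ × ℤ | Int.gcd v.1 v.2 = 1}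
          = {v : ℤ × ℤ | Int.gcd v.1 v.2 = 1}) :
    t = 0 := by
  have fwd : ∀ v : ℤ × ℤ, Int.gcd v.1 v.2 = 1 → Int.gcd (t.1 + v.1) (t.2 + v.2) = 1 := by
    intro v hv
    have : t + v ∈ {v : ℤ × ℤ | Int.gcd v.1 v.2 = 1} := by
      rw [← h]; exact ⟨v, hv, rfl⟩
    exact this
  have bwd : ∀ w : ℤ × ℤ, Int.gcd w.1 w.2 = 1 → Int.gcd (w.1 - t.1) (w.2 - t.2) = 1 := by
    intro w hw
    have hw' : w ∈ (fun v : ℤ × ℤ => t + v) '' {v : ℤ × ℤ | Int.gcd v.1 v.2 = 1} := by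
      rw [h]; exact hw
    obtain ⟨v, hv, hvw⟩ := hw'
    have h1 : w.1 - t.1 = v.1 := by
      have := congrArg Prod.fst hvw; simp at this; omega
    have h2 : w.2 - t.2 = v.2 := by
      have := congrArg Prod.snd hvw; simp at this; omega
    rw [h1, h2]; exact hv
  have g1 : ∀ m : ℤ, Int.gcd (1 : ℤ) m = 1 := by
    intro m; simp [Int.gcd]
  have g2 : ∀ m : ℤ, Int.gcd m (1 : ℤ) = 1 := by
    intro m; simp [Int.gcd]
  -- force |t.1 + 1| = 1
  have a1 := fwd (1, t.1 + 1 - t.2) (g1 _)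
  simp only at a1
  have a1' : Int.gcd (t.1 + 1) (t.1 + 1) = 1 := by
    have : t.2 + (t.1 + 1 - t.2) = t.1 + 1 := by ring
    rwa [this] at a1
  rw [Int.gcd_self] at a1'
  -- force |1 - t.1| = 1
  have b1 := bwd (1, t.2 + (1 - t.1)) (g1 _)
  simp only at b1
  have b1' : Int.gcd (1 - t.1) (1 - t.1) = 1 := by
    have : t.2 + (1 - t.1) - t.2 = 1 - t.1 := by ring
    rwa [this] at b1
  rw [Int.gcd_self] at b1'
  -- force |t.2 + 1| = 1
  have a2 := fwd (t.2 + 1 - t.1, 1) (g2 _)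
  simp only at a2
  have a2' : Int.gcd (t.2 + 1) (t.2 + 1) = 1 := by
    have : t.1 + (t.2 + 1 - t.1) = t.2 + 1 := by ring
    rwa [this] at a2
  rw [Int.gcd_self] at a2'
  -- force |1 - t.2| = 1
  have b2 := bwd (t.1 + (1 - t.2), 1) (g2 _)
  simp only at b2
  have b2' : Int.gcd (1 - t.2) (1 - t.2) = 1 := by
    have : t.1 + (1 - t.2) - t.1 = 1 - t.2 := by ring
    rwa [this] at b2
  rw [Int.gcd_self] at b2'
  rw [Prod.ext_iff]
  constructor <;> simp <;> omega
end

section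
/- The set of squarefree integers is non-periodic: if t ∈ ℤ satisfies t + S = S where S is the set of squarefree integers, then t = 0. -/
lemma sqf_step (t : ℤ)
    (h : (fun n : ℤ => t + n) '' {n : ℤ | Squarefree n} = {n : ℤ | Squarefree n})
    {n : ℤ} (hn : Squarefree n) : Squarefree (t + n) := by
  have : t + n ∈ {n : ℤ | Squarefree n} := by
    rw [← h]; exact ⟨n, hn, rfl⟩
  exact this

lemma sqf_iter (t : ℤ)
    (h : (fun n : ℤ => t + n) '' {n : ℤ | Squarefree n} = {n : ℤ | Squarefree n}) :
    ∀ k : ℕ, Squarefree (1 + (k : ℤ) * t) := by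
  intro k
  induction k with
  | zero => simp only [Nat.cast_zero, zero_mul, add_zero]; exact squarefree_one
  | succ k ih =>
      have := sqf_step t h ih
      have e : 1 + ((k : ℤ) + 1) * t = t + (1 + (k : ℤ) * t) := by ring
      rw [Nat.cast_succ, e]
      exact this

/-- The set of squarefree integers is non-periodic. -/
theorem squarefree_nonperiodic (t : ℤ)
    (h : (fun n : ℤ => t + n) '' {n : ℤ | Squarefree n} = {n : ℤ | Squarefree n}) :
    t = 0 := by
  by_contra ht
  -- pick a prime p bigger than |t|
  obtain ⟨p, hpgt, hp⟩ := Nat.exists_infinite_primes (t.natAbs + 1)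
  have hpt : ¬ (p : ℤ) ∣ t := by
    intro hdvd
    have h1 : (p : ℤ).natAbs ∣ t.natAbs := Int.natAbs_dvd_natAbs.mpr hdvd
    have h2 : p ≤ t.natAbs := Nat.le_of_dvd (Int.natAbs_pos.mpr ht) (by simpa using h1)
    omega
  have hpZ : Prime (p : ℤ) := Int.prime_iff_natAbs_prime.mpr (by simpa using hp)
  have hcop : IsCoprime (t : ℤ) ((p : ℤ) ^ 2) :=
    ((hpZ.coprime_iff_not_dvd.mpr hpt).symm.pow_right)
  -- Bezout: a * t + b * p^2 = 1
  obtain ⟨a, b, hab⟩ := hcop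
  -- choose k ≡ -a mod p^2, nonneg
  set M : ℤ := (p : ℤ) ^ 2 with hM
  have hMpos : 0 < M := by have := hp.pos; positivity
  set k : ℕ := ((-a) % M).toNat with hk
  have hkZ : (k : ℤ) = (-a) % M := Int.toNat_of_nonneg (Int.emod_nonneg _ (ne_of_gt hMpos))
  have hdvd : M ∣ 1 + (k : ℤ) * t := by
    have h1 : M ∣ (k : ℤ) - (-a) := by
      rw [hkZ, Int.emod_def]
      exact ⟨-((-a) / M), by ring⟩
    obtain ⟨c, hc⟩ := h1
    have : 1 + (k : ℤ) * t = c * t * M + (1 - a * t) := by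
      have : (k : ℤ) = -a + M * c := by linarith
      rw [this]; ring
    rw [this]
    have h2 : 1 - a * t = b * M := by linarith [hab]
    rw [h2]
    exact dvd_add (Dvd.intro_left _ rfl) (dvd_mul_left M b)
  have hsf := sqf_iter t h k
  have hpp : (p : ℤ) * (p : ℤ) ∣ 1 + (k : ℤ) * t := by
    rwa [hM, sq] at hdvd
  exact hpZ.not_unit (hsf _ hpp)
end

section
/- Every finite admissible subset of ℤ is the restriction of some pattern realized by the squarefree integers: if F ⊆ ℤ is finite and for every prime p the image of F mod p² omits a residue class, then there exists t ∈ ℤ such that every element of t + F is squarefree. (Consequence: the orbit closure of the squarefree integers in {0,1}^ℤ equals the set of admissible configurations restricted to finite windows.) -/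
open Finset

lemma crt_aux (S : Finset ℕ) (hS : ∀ p ∈ S, p.Prime) (z : ℕ → ℤ) :
    ∃ r : ℤ, ∀ p ∈ S, ((p : ℤ))^2 ∣ r - z p := by
  classical
  induction S using Finset.induction_on with
  | empty => exact ⟨0, by simp⟩
  | @insert q S hq ih =>
    obtain ⟨r₁, hr₁⟩ := ih (fun p hp => hS p (mem_insert_of_mem hp))
    have hqP : q.Prime := hS q (mem_insert_self _ _)
    have hcop : IsCoprime ((q:ℤ)^2) (∏ p ∈ S, (p:ℤ)^2) := by
      have hn : Nat.Coprime (q^2) (∏ p ∈ S, p^2) := by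
        apply Nat.Coprime.prod_right
        intro p hp
        exact Nat.Coprime.pow _ _ ((Nat.coprime_primes hqP (hS p (mem_insert_of_mem hp))).mpr
          (fun h => hq (h ▸ hp)))
      have := (Nat.isCoprime_iff_coprime).mpr hn
      push_cast at this
      exact this
    obtain ⟨u, v, huv⟩ := hcop
    set Q₁ : ℤ := ∏ p ∈ S, (p:ℤ)^2 with hQ₁
    refine ⟨r₁ * (u * (q:ℤ)^2) + z q * (v * Q₁), ?_⟩
    intro p hp
    rcases mem_insert.mp hp with rfl | hpS
    · exact ⟨u * (r₁ - z p), by linear_combination (z p) * huv⟩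
    · have h1 : (p:ℤ)^2 ∣ Q₁ := Finset.dvd_prod_of_mem _ hpS
      have h2 : (p:ℤ)^2 ∣ r₁ - z p := hr₁ p hpS
      have : r₁ * (u * (q:ℤ)^2) + z q * (v * Q₁) - z p
          = (r₁ - z p) + (v * (z q - r₁)) * Q₁ := by linear_combination r₁ * huv
      rw [this]
      exact dvd_add h2 (Dvd.dvd.mul_left h1 _)

lemma count_ap (M m Q : ℕ) (hm : 0 < m) (hcop : IsCoprime (m:ℤ) (Q:ℤ)) (a : ℤ) :
    ((range M).filter (fun k : ℕ => (m:ℤ) ∣ a + Q * (k:ℤ))).card ≤ M / m + 1 := by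
  have : ((range M).filter (fun k : ℕ => (m:ℤ) ∣ a + Q * (k:ℤ))).card ≤ (range (M / m + 1)).card := by
    apply Finset.card_le_card_of_injOn (fun k => k / m)
    · intro k hk
      simp only [coe_filter, Set.mem_setOf_eq, mem_coe, mem_filter, mem_range] at hk ⊢
      exact lt_of_le_of_lt (Nat.div_le_div_right hk.1.le) (Nat.lt_succ_self _)
    · intro k₁ h₁ k₂ h₂ hdiv
      have hdiv' : k₁ / m = k₂ / m := by simpa using hdiv
      simp only [coe_filter, Set.mem_setOf_eq, mem_range] at h₁ h₂
      have hd : (m:ℤ) ∣ (Q:ℤ) * ((k₁:ℤ) - k₂) := by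
        have := dvd_sub h₁.2 h₂.2
        have e : a + Q * (k₁:ℤ) - (a + Q * (k₂:ℤ)) = (Q:ℤ) * ((k₁:ℤ) - k₂) := by ring
        rwa [e] at this
      have hd2 : (m:ℤ) ∣ ((k₁:ℤ) - k₂) := hcop.dvd_of_dvd_mul_left hd
      have hmod : (k₁:ℤ) % m = (k₂:ℤ) % m := ((Int.modEq_iff_dvd).mpr hd2).symm
      have hmn : k₁ % m = k₂ % m := by exact_mod_cast hmod
      have e₁ := Nat.div_add_mod k₁ m
      have e₂ := Nat.div_add_mod k₂ m
      rw [hdiv', hmn] at e₁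
      omega
  simpa using this

lemma telescope (B : ℕ) (hB : 0 < B) (K : ℕ) :
    ∑ n ∈ Finset.Ioc B K, (1:ℚ)/(n:ℚ)^2 ≤ 1/B := by
  rcases le_or_gt K B with h | h
  · rw [Finset.Ioc_eq_empty (by omega)]
    simp only [Finset.sum_empty]
    positivity
  · have main : ∀ K, B ≤ K → ∑ n ∈ Finset.Ioc B K, (1:ℚ)/(n:ℚ)^2 ≤ 1/B - 1/K := by
      intro K hK
      induction K, hK using Nat.le_induction with
      | base => simp
      | succ K hBK ih =>
        rw [Finset.sum_Ioc_succ_top hBK]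
        have hK0 : (0:ℚ) < K := by exact_mod_cast Nat.lt_of_lt_of_le hB hBK
        have hK1 : (0:ℚ) < (K:ℚ) + 1 := by linarith
        have step : (1:ℚ)/((K:ℚ)+1)^2 ≤ 1/K - 1/((K:ℚ)+1) := by
          rw [div_sub_div _ _ (ne_of_gt hK0) (ne_of_gt hK1)]
          rw [div_le_div_iff₀ (by positivity) (by positivity)]
          ring_nf
          nlinarith [sq_nonneg ((K:ℚ))]
        have := ih
        push_cast
        linarith
    have := main K h.le
    have hK0 : (0:ℚ) < K := by exact_mod_cast Nat.lt_of_le_of_lt (Nat.zero_le _) h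
    have : (0:ℚ) ≤ 1/K := by positivity
    linarith [main K h.le]

/-- Every finite admissible pattern is realized by the squarefree integers:
if F ⊆ ℤ is finite and for every prime p the image of F mod p² omits a residue class,
then some translate of F consists entirely of squarefree integers. -/
theorem admissible_pattern_realized (F : Finset ℤ)
    (hF : ∀ p : ℕ, p.Prime → ∃ c : ZMod (p ^ 2), ∀ x ∈ F, (x : ZMod (p ^ 2)) ≠ c) :
    ∃ t : ℤ, ∀ x ∈ F, Squarefree (t + x) := by
  classical
  by_contra hcon
  push_neg at hcon
  choose c hc using hF
  set s := F.card with hs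
  set B := 2 * s + 2 with hB
  set P₀ : Finset ℕ := (Finset.range (B+1)).filter Nat.Prime with hP₀
  set z : ℕ → ℤ := fun p => if hp : p.Prime then (((-(c p hp)).val : ℕ) : ℤ) else 0 with hz
  obtain ⟨r, hr⟩ := crt_aux P₀ (fun p hp => (Finset.mem_filter.mp hp).2) z
  set Q : ℕ := ∏ p ∈ P₀, p^2 with hQ
  have hQpos : 0 < Q :=
    Finset.prod_pos (fun p hp => pow_pos (Finset.mem_filter.mp hp).2.pos _)
  set C : ℕ := F.sup (fun x => x.natAbs) with hC
  set R : ℕ := r.natAbs with hR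
  set D : ℕ := Q + R + C + 1 with hD
  clear_value D
  set M : ℕ := 8 * s * s * D + D with hM
  clear_value M
  have hMpos : 0 < M := by omega
  set K : ℕ := R + Q * M + C with hK
  clear_value K
  -- small primes never divide r + Q*k + x
  have small : ∀ k : ℕ, ∀ x ∈ F, ∀ p ∈ P₀, ¬ ((p:ℤ)^2 ∣ r + Q * k + x) := by
    intro k x hx p hp hdvd
    obtain ⟨hpB, hpP⟩ := Finset.mem_filter.mp hp
    haveI : NeZero (p^2) := ⟨pow_ne_zero _ hpP.ne_zero⟩
    have hQd : (p:ℤ)^2 ∣ (Q:ℤ) := by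
      have h := Finset.dvd_prod_of_mem (fun p : ℕ => p^2) hp
      rw [← hQ] at h
      exact_mod_cast Int.natCast_dvd_natCast.mpr h
    have h1 : (p:ℤ)^2 ∣ (z p + x) := by
      have h2 := hr p hp
      have h3 := dvd_sub (dvd_sub hdvd h2) (hQd.mul_right (k:ℤ))
      have e : r + (Q:ℤ) * k + x - (r - z p) - (Q:ℤ) * k = z p + x := by ring
      rwa [e] at h3
    have h0 : ((z p + x : ℤ) : ZMod (p^2)) = 0 := by
      rw [ZMod.intCast_zmod_eq_zero_iff_dvd]
      exact_mod_cast h1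
    have hzp : ((z p : ℤ) : ZMod (p^2)) = -(c p hpP) := by
      rw [hz]
      simp only [dif_pos hpP]
      push_cast
      rw [ZMod.natCast_val, ZMod.cast_id]
    rw [Int.cast_add, hzp, neg_add_eq_sub, sub_eq_zero] at h0
    exact hc p hpP x hx h0
  have h2P : (2:ℕ) ∈ P₀ :=
    Finset.mem_filter.mpr ⟨Finset.mem_range.mpr (by omega), Nat.prime_two⟩
  set Ppr : Finset ℕ := (Finset.Ioc B (Nat.sqrt K)).filter Nat.Prime with hPpr
  clear_value Ppr
  clear_value s B Q C R
  -- each k < M admits a bad pair (x, p) with p a big prime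
  have big : ∀ k ∈ Finset.range M, ∃ q ∈ F ×ˢ Ppr, (q.2:ℤ)^2 ∣ r + (Q:ℤ) * k + q.1 := by
    intro k hk
    obtain ⟨x, hx, hnsq⟩ := hcon (r + (Q:ℤ) * k)
    set y : ℤ := r + (Q:ℤ) * k + x with hy
    have hy0 : y ≠ 0 := by
      intro h0
      refine small k x hx 2 h2P ?_
      rw [show r + (Q:ℤ)*k + x = y from hy.symm, h0]
      exact dvd_zero _
    have hnab : ¬ Squarefree y.natAbs := fun h => hnsq (Int.squarefree_natAbs.mp h)
    rw [Nat.squarefree_iff_prime_squarefree] at hnab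
    push_neg at hnab
    obtain ⟨p, hpP, hpd⟩ := hnab
    have hpd' : (p:ℤ)^2 ∣ y := by
      have h4 : ((p*p : ℕ) : ℤ) ∣ y := Int.dvd_natAbs.mp (Int.natCast_dvd_natCast.mpr hpd)
      have e : ((p*p : ℕ) : ℤ) = (p:ℤ)^2 := by push_cast; ring
      rwa [e] at h4
    have hpB : B < p := by
      by_contra hle
      push_neg at hle
      exact small k x hx p
        (Finset.mem_filter.mpr ⟨Finset.mem_range.mpr (by omega), hpP⟩) hpd'
    have hyK : y.natAbs ≤ K := by
      have t1 : y.natAbs ≤ (r + (Q:ℤ)*k).natAbs + x.natAbs := Int.natAbs_add_le _ _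
      have t2 : (r + (Q:ℤ)*k).natAbs ≤ R + Q * k := by
        have := Int.natAbs_add_le r ((Q:ℤ)*k)
        have e : ((Q:ℤ)*(k:ℤ)).natAbs = Q * k := by
          rw [Int.natAbs_mul]
          simp
        omega
      have t3 : x.natAbs ≤ C := by
        rw [hC]
        exact Finset.le_sup (f := fun x : ℤ => x.natAbs) hx
      have t4 : Q * k ≤ Q * M := Nat.mul_le_mul_left _ (Finset.mem_range.mp hk).le
      omega
    have hpK : p ≤ Nat.sqrt K := by
      rw [Nat.le_sqrt]
      have h5 : p*p ≤ y.natAbs := Nat.le_of_dvd (Int.natAbs_pos.mpr hy0) hpd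
      omega
    refine ⟨(x, p), Finset.mem_product.mpr ⟨hx, ?_⟩, hpd'⟩
    rw [hPpr]
    exact Finset.mem_filter.mpr ⟨Finset.mem_Ioc.mpr ⟨hpB, hpK⟩, hpP⟩
  -- counting
  have hsub : Finset.range M ⊆ (F ×ˢ Ppr).biUnion
      (fun q => (Finset.range M).filter (fun k : ℕ => (q.2:ℤ)^2 ∣ r + (Q:ℤ) * k + q.1)) := by
    intro k hk
    obtain ⟨q, hq, hdq⟩ := big k hk
    exact Finset.mem_biUnion.mpr ⟨q, hq, Finset.mem_filter.mpr ⟨hk, hdq⟩⟩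
  have count : M ≤ ∑ q ∈ F ×ˢ Ppr,
      ((Finset.range M).filter (fun k : ℕ => (q.2:ℤ)^2 ∣ r + (Q:ℤ) * k + q.1)).card := by
    have := (Finset.card_le_card hsub).trans Finset.card_biUnion_le
    simpa using this
  have bound : ∀ q ∈ F ×ˢ Ppr,
      ((Finset.range M).filter (fun k : ℕ => (q.2:ℤ)^2 ∣ r + (Q:ℤ) * k + q.1)).card
        ≤ M / (q.2^2) + 1 := by
    intro q hq
    obtain ⟨hq1, hq2⟩ := Finset.mem_product.mp hq
    rw [hPpr] at hq2
    obtain ⟨hqI, hqP⟩ := Finset.mem_filter.mp hq2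
    have hqB : B < q.2 := (Finset.mem_Ioc.mp hqI).1
    have hcop : IsCoprime ((q.2^2 : ℕ) : ℤ) ((Q : ℕ) : ℤ) := by
      rw [Nat.isCoprime_iff_coprime, hQ]
      apply Nat.Coprime.prod_right
      intro p hp
      obtain ⟨hpB, hpP⟩ := Finset.mem_filter.mp hp
      have hne : q.2 ≠ p := by
        intro h
        rw [Finset.mem_range] at hpB
        omega
      exact Nat.Coprime.pow _ _ ((Nat.coprime_primes hqP hpP).mpr hne)
    have key := count_ap M (q.2^2) Q (pow_pos hqP.pos 2)
      (by push_cast at hcop ⊢; exact hcop) (r + q.1)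
    have e : (Finset.range M).filter (fun k : ℕ => (q.2:ℤ)^2 ∣ r + (Q:ℤ) * k + q.1)
        = (Finset.range M).filter (fun k : ℕ => ((q.2^2 : ℕ):ℤ) ∣ (r + q.1) + (Q:ℤ) * k) := by
      apply Finset.filter_congr
      intro k _
      constructor
      · intro h
        have e2 : r + (Q:ℤ)*k + q.1 = (r + q.1) + (Q:ℤ)*k := by ring
        rw [← e2]
        exact_mod_cast (by push_cast; exact h : ((q.2:ℤ))^2 ∣ r + (Q:ℤ)*k + q.1)
      · intro h
        have e2 : (r + q.1) + (Q:ℤ)*k = r + (Q:ℤ)*k + q.1 := by ring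
        rw [e2] at h
        exact_mod_cast h
    rw [e]
    exact key
  -- pass to ℚ
  have hsqK : Nat.sqrt K * Nat.sqrt K ≤ K := Nat.sqrt_le K
  have hBQpos : (0:ℚ) < (B:ℚ) := by
    have : 0 < B := by omega
    exact_mod_cast this
  have chain : (M:ℚ) ≤ (s:ℚ) * ((M:ℚ)/(B:ℚ) + (Nat.sqrt K : ℚ)) := by
    have c1 : (M:ℚ) ≤ ∑ q ∈ F ×ˢ Ppr, ((M / (q.2^2) + 1 : ℕ) : ℚ) := by
      exact_mod_cast count.trans (Finset.sum_le_sum bound)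
    have c2 : ∀ q ∈ F ×ˢ Ppr, ((M / (q.2^2) + 1 : ℕ) : ℚ) ≤ (M:ℚ)/((q.2:ℚ))^2 + 1 := by
      intro q hq
      have h6 : ((M / q.2^2 : ℕ) : ℚ) ≤ (M:ℚ)/((q.2:ℚ))^2 := by
        have := Nat.cast_div_le (α := ℚ) (m := M) (n := q.2^2)
        push_cast at this
        exact this
      push_cast
      linarith
    have c3 : (M:ℚ) ≤ ∑ q ∈ F ×ˢ Ppr, ((M:ℚ)/((q.2:ℚ))^2 + 1) :=
      c1.trans (Finset.sum_le_sum c2)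
    rw [Finset.sum_product] at c3
    have c4 : ∑ x ∈ F, ∑ p ∈ Ppr, ((M:ℚ)/((p:ℚ))^2 + 1)
        = (s:ℚ) * ∑ p ∈ Ppr, ((M:ℚ)/((p:ℚ))^2 + 1) := by
      rw [Finset.sum_const, nsmul_eq_mul, hs]
    rw [c4] at c3
    have c5 : ∑ p ∈ Ppr, ((M:ℚ)/((p:ℚ))^2 + 1) ≤ (M:ℚ)/(B:ℚ) + (Nat.sqrt K : ℚ) := by
      rw [Finset.sum_add_distrib, Finset.sum_const, nsmul_eq_mul, mul_one]
      have c6 : ∑ p ∈ Ppr, (M:ℚ)/((p:ℚ))^2 ≤ (M:ℚ)/(B:ℚ) := by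
        have e7 : ∑ p ∈ Ppr, (M:ℚ)/((p:ℚ))^2 = (M:ℚ) * ∑ p ∈ Ppr, (1:ℚ)/((p:ℚ))^2 := by
          rw [Finset.mul_sum]
          exact Finset.sum_congr rfl (fun p _ => by ring)
        have e8 : ∑ p ∈ Ppr, (1:ℚ)/((p:ℚ))^2
            ≤ ∑ n ∈ Finset.Ioc B (Nat.sqrt K), (1:ℚ)/((n:ℚ))^2 :=
          Finset.sum_le_sum_of_subset_of_nonneg
            (by rw [hPpr]; exact Finset.filter_subset _ _) (fun n _ _ => by positivity)
        have e9 := telescope B (by omega) (Nat.sqrt K)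
        rw [e7]
        calc (M:ℚ) * ∑ p ∈ Ppr, (1:ℚ)/((p:ℚ))^2
            ≤ (M:ℚ) * (1/(B:ℚ)) := by
              apply mul_le_mul_of_nonneg_left (e8.trans e9) (by positivity)
          _ = (M:ℚ)/(B:ℚ) := by ring
      have c7 : ((Ppr.card : ℕ) : ℚ) ≤ ((Nat.sqrt K : ℕ) : ℚ) := by
        have h8 : Ppr.card ≤ (Finset.Ioc B (Nat.sqrt K)).card :=
          Finset.card_le_card (by rw [hPpr]; exact Finset.filter_subset _ _)
        rw [Nat.card_Ioc] at h8
        exact_mod_cast h8.trans (Nat.sub_le _ _)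
      linarith
    calc (M:ℚ) ≤ (s:ℚ) * ∑ p ∈ Ppr, ((M:ℚ)/((p:ℚ))^2 + 1) := c3
      _ ≤ (s:ℚ) * ((M:ℚ)/(B:ℚ) + (Nat.sqrt K : ℚ)) := by
          apply mul_le_mul_of_nonneg_left c5 (by positivity)
  have hMain : M ≤ 2 * s * Nat.sqrt K := by
    have hBval : (B:ℚ) = 2*(s:ℚ)+2 := by rw [hB]; push_cast; ring
    have h1 : (s:ℚ) * ((M:ℚ)/(B:ℚ)) ≤ (M:ℚ)/2 := by
      have e1 : (s:ℚ)*((M:ℚ)/(B:ℚ)) = (M:ℚ) * ((s:ℚ)/(B:ℚ)) := by ring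
      have h2 : (s:ℚ)/(B:ℚ) ≤ 1/2 := by
        rw [div_le_div_iff₀ hBQpos (by norm_num), hBval]
        linarith
      rw [e1]
      calc (M:ℚ) * ((s:ℚ)/(B:ℚ)) ≤ (M:ℚ) * (1/2) :=
            mul_le_mul_of_nonneg_left h2 (by positivity)
        _ = (M:ℚ)/2 := by ring
    have expand : (s:ℚ)*((M:ℚ)/(B:ℚ) + (Nat.sqrt K : ℚ))
        = (s:ℚ)*((M:ℚ)/(B:ℚ)) + (s:ℚ)*(Nat.sqrt K : ℚ) := by ring
    have h4 : (M:ℚ) ≤ 2*(s:ℚ)*(Nat.sqrt K : ℚ) := by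
      rw [expand] at chain
      linarith
    exact_mod_cast h4
  have hKle : K ≤ 2 * (D * M) := by
    have t1 : Q * M ≤ D * M := Nat.mul_le_mul_right _ (by omega)
    have t2 : R + C + 1 ≤ D := by omega
    have t3 : D ≤ D * M := Nat.le_mul_of_pos_right _ hMpos
    omega
  have final : M * M ≤ 8 * s * s * D * M := by
    calc M * M ≤ (2*s*Nat.sqrt K) * (2*s*Nat.sqrt K) := Nat.mul_le_mul hMain hMain
      _ = 4*(s*s)*(Nat.sqrt K * Nat.sqrt K) := by ring
      _ ≤ 4*(s*s)*K := Nat.mul_le_mul_left _ hsqK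
      _ ≤ 4*(s*s)*(2*(D*M)) := Nat.mul_le_mul_left _ hKle
      _ = (8*s*s*D)*M := by ring
  have hlt : 8*s*s*D < M := by omega
  exact absurd (lt_of_le_of_lt final ((Nat.mul_lt_mul_right hMpos).mpr hlt)) (lt_irrefl _)
end

section
/- The dynamical system given by the orbit closure 𝕏 of the squarefree integers under ℤ-translation is proximal: for any X, Y ∈ 𝕏 and any R > 0 there exists t ∈ ℤ with (X + t) ∩ [-R,R] = (Y + t) ∩ [-R,R] = ∅. -/
/-- If `p^2` divides `a` for a prime `p`, then `a` is not squarefree. -/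
lemma not_squarefree_of_prime_sq_dvd {p : ℕ} (hp : p.Prime) {a : ℤ}
    (h : (p : ℤ) ^ 2 ∣ a) : ¬ Squarefree a := by
  intro hs
  have hdvd : (p : ℤ) * (p : ℤ) ∣ a := by rwa [← sq]
  exact (Nat.prime_iff_prime_int.mp hp).not_unit (hs (p : ℤ) hdvd)

/-- For every `N`, there is a modulus `M > 0` such that for every finite set `F`
of at most `N` integers there is `c` with every `c + k*M + n` (`n ∈ F`) not
squarefree. -/
lemma killer (N : ℕ) : ∃ M : ℤ, 0 < M ∧ ∀ F : Finset ℤ, F.card ≤ N →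
    ∃ c : ℤ, ∀ k : ℤ, ∀ n ∈ F, ¬ Squarefree (c + k * M + n) := by
  induction N with
  | zero =>
    refine ⟨1, one_pos, fun F hF => ⟨0, ?_⟩⟩
    have : F = ∅ := Finset.card_eq_zero.mp (Nat.le_zero.mp hF)
    simp [this]
  | succ N ih =>
    obtain ⟨M, hM, hA⟩ := ih
    obtain ⟨p, hpM, hp⟩ := Nat.exists_infinite_primes (M.natAbs + 1)
    have hpdvd : ¬ (p : ℤ) ∣ M := by
      intro h
      have h1 : p ∣ M.natAbs := by simpa using Int.natAbs_dvd_natAbs.mpr h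
      have := Nat.le_of_dvd (Int.natAbs_pos.mpr hM.ne') h1
      omega
    have hcop : IsCoprime ((p : ℤ) ^ 2) M :=
      (((Nat.prime_iff_prime_int.mp hp).coprime_iff_not_dvd).mpr hpdvd).pow_left
    refine ⟨M * (p : ℤ) ^ 2, mul_pos hM (pow_pos (by exact_mod_cast hp.pos) 2), ?_⟩
    intro F hF
    rcases F.eq_empty_or_nonempty with rfl | ⟨n, hn⟩
    · exact ⟨0, by simp⟩
    · obtain ⟨c, hc⟩ := hA (F.erase n) (by
        have := Finset.card_erase_of_mem hn; omega)
      obtain ⟨u, v, huv⟩ := hcop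
      refine ⟨c * (u * (p : ℤ) ^ 2) + (-n) * (v * M), ?_⟩
      intro k m hm
      rcases eq_or_ne m n with rfl | hmn
      · refine not_squarefree_of_prime_sq_dvd hp ⟨(c + m) * u + k * M, ?_⟩
        linear_combination (-m) * huv
      · have hm' : m ∈ F.erase n := Finset.mem_erase.mpr ⟨hmn, hm⟩
        have heq : c * (u * (p : ℤ) ^ 2) + (-n) * (v * M) + k * (M * (p : ℤ) ^ 2) + m
            = c + (-(c + n) * v + k * (p : ℤ) ^ 2) * M + m := by
          linear_combination c * huv
        rw [heq]
        exact hc _ m hm'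

/-- The orbit closure (hull) of the squarefree integers in {0,1}^ℤ under the
translation action of ℤ. -/
def SqfHull : Set (ℤ → Bool) :=
  closure {f : ℤ → Bool | ∃ t : ℤ, ∀ n : ℤ, f n = true ↔ Squarefree (n + t)}

/-- Any element of the hull agrees on any finite window with some translate of
the squarefree indicator. -/
lemma sqfHull_approx {X : ℤ → Bool} (hX : X ∈ SqfHull) (W : Finset ℤ) :
    ∃ s : ℤ, ∀ n ∈ W, (X n = true ↔ Squarefree (n + s)) := by
  have hopen : IsOpen (⋂ n ∈ W, {g : ℤ → Bool | g n = X n}) := by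
    refine isOpen_biInter_finset (f := fun n => {g : ℤ → Bool | g n = X n}) fun n _ => ?_
    show IsOpen ((fun g : ℤ → Bool => g n) ⁻¹' {X n})
    exact (continuous_apply (A := fun _ : ℤ => Bool) n).isOpen_preimage ({X n} : Set Bool) (isOpen_discrete _)
  have hmem : X ∈ ⋂ n ∈ W, {g : ℤ → Bool | g n = X n} := by
    simp
  obtain ⟨f, hfU, hfS⟩ := mem_closure_iff.mp hX _ hopen hmem
  obtain ⟨s, hs⟩ := hfS
  refine ⟨s, fun n hn => ?_⟩
  have hfn : f n = X n := by
    simpa using Set.mem_iInter₂.mp hfU n hn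
  rw [← hfn]
  exact hs n

/-- The hull of the squarefree integers is proximal: any two elements can be
simultaneously translated so as to vanish on any given window [-R,R]. -/
theorem sqfHull_proximal (X Y : ℤ → Bool) (hX : X ∈ SqfHull) (hY : Y ∈ SqfHull)
    (R : ℤ) (hR : 0 < R) :
    ∃ t : ℤ, ∀ n : ℤ, -R ≤ n → n ≤ R → X (n - t) = false ∧ Y (n - t) = false := by
  obtain ⟨M, hM, hA⟩ := killer (2 * (2 * R + 1).toNat)
  set W : Finset ℤ := Finset.Icc 0 (M + 2 * R) with hW
  obtain ⟨s, hsX⟩ := sqfHull_approx hX W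
  obtain ⟨t, htY⟩ := sqfHull_approx hY W
  set F : Finset ℤ :=
    ((Finset.Icc 0 (2 * R)).image (· + s)) ∪ ((Finset.Icc 0 (2 * R)).image (· + t)) with hF
  have hFcard : F.card ≤ 2 * (2 * R + 1).toNat := by
    have h1 := Finset.card_union_le ((Finset.Icc 0 (2 * R)).image (· + s))
      ((Finset.Icc 0 (2 * R)).image (· + t))
    have h2 := Finset.card_image_le (s := Finset.Icc (0:ℤ) (2 * R)) (f := (· + s))
    have h3 := Finset.card_image_le (s := Finset.Icc (0:ℤ) (2 * R)) (f := (· + t))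
    have h4 : (Finset.Icc (0:ℤ) (2 * R)).card = (2 * R + 1).toNat := by
      rw [Int.card_Icc]; ring_nf
    rw [hF]
    omega
  obtain ⟨c, hc⟩ := hA F hFcard
  set c' : ℤ := c % M with hc'
  have hc'0 : 0 ≤ c' := Int.emod_nonneg c hM.ne'
  have hc'M : c' < M := Int.emod_lt_of_pos c hM
  have key : ∀ i : ℤ, 0 ≤ i → i ≤ 2 * R → X (c' + i) = false ∧ Y (c' + i) = false := by
    intro i hi0 hi2
    have hmemW : c' + i ∈ W := by
      rw [hW, Finset.mem_Icc]; omega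
    have hiI : i ∈ Finset.Icc (0:ℤ) (2 * R) := Finset.mem_Icc.mpr ⟨hi0, hi2⟩
    have harg : ∀ z : ℤ, c + (-(c / M)) * M + (i + z) = c' + i + z := by
      intro z; rw [hc', Int.emod_def]; ring
    constructor
    · have hnsq : ¬ Squarefree (c' + i + s) := by
        rw [← harg s]
        exact hc (-(c / M)) (i + s) (Finset.mem_union_left _ (Finset.mem_image_of_mem _ hiI))
      have := (hsX (c' + i) hmemW)
      rw [Bool.eq_false_iff]
      intro h
      exact hnsq (this.mp h)
    · have hnsq : ¬ Squarefree (c' + i + t) := by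
        rw [← harg t]
        exact hc (-(c / M)) (i + t) (Finset.mem_union_right _ (Finset.mem_image_of_mem _ hiI))
      have := (htY (c' + i) hmemW)
      rw [Bool.eq_false_iff]
      intro h
      exact hnsq (this.mp h)
  refine ⟨-(c' + R), fun n hn1 hn2 => ?_⟩
  have : n - -(c' + R) = c' + (n + R) := by ring
  rw [this]
  exact key (n + R) (by omega) (by omega)
end

section
/- {∅} is the unique minimal closed ℤ-invariant subset of the orbit closure 𝕏 of the squarefree integers; equivalently, every nonempty closed ℤ-invariant subset of 𝕏 contains the empty configuration. -/
/-- By CRT, there are periodically recurring runs of `N` consecutive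
non-squarefree integers. -/
lemma nonsqfree_run (N : ℕ) : ∃ r P : ℤ, 0 < P ∧
    ∀ k : ℤ, ∀ i : ℕ, i < N → ¬ Squarefree (r + k * P + i) := by
  induction N with
  | zero => exact ⟨0, 1, one_pos, by omega⟩
  | succ N ih =>
    obtain ⟨r, P, hP, h⟩ := ih
    obtain ⟨q, hq, hqp⟩ := Nat.exists_infinite_primes (P.natAbs + 1)
    have hqZ : Prime (q : ℤ) := Nat.prime_iff_prime_int.mp hqp
    have hnd : ¬ (q : ℤ) ∣ P := by
      intro hd
      have h1 := Int.le_of_dvd hP hd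
      have h2 : P = (P.natAbs : ℤ) := (Int.natAbs_of_nonneg hP.le).symm
      rw [h2] at h1
      exact_mod_cast absurd h1 (by push_cast; omega)
    have hcop : IsCoprime P ((q : ℤ) * q) :=
      ((hqZ.coprime_iff_not_dvd.mpr hnd).symm.mul_right
        (hqZ.coprime_iff_not_dvd.mpr hnd).symm)
    obtain ⟨u, v, huv⟩ := hcop
    set Q : ℤ := (q : ℤ) * q with hQ
    refine ⟨r * (v * Q) + (-(N : ℤ)) * (u * P), P * Q, ?_, ?_⟩
    · have : (0:ℤ) < q := by exact_mod_cast hqp.pos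
      exact mul_pos hP (mul_pos this this)
    · intro k i hi
      rcases Nat.lt_succ_iff_lt_or_eq.mp hi with hi' | rfl
      · have key : r * (v * Q) + (-(N : ℤ)) * (u * P) + k * (P * Q) + i
            = r + (-(r + N) * u + k * Q) * P + i := by linear_combination (r:ℤ) * huv
        rw [key]; exact h _ i hi'
      · intro hsq
        have hdvd : (q : ℤ) * q ∣ r * (v * Q) + (-(i : ℤ)) * (u * P) + k * (P * Q) + i :=
          ⟨(r + i) * v + k * P, by linear_combination (-(i:ℤ)) * huv⟩
        exact hqZ.not_unit (hsq _ hdvd)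

/-- A run of `N` consecutive non-squarefree integers (after shifting by `t`)
can be found within a window `[0, P)` of fixed size. -/
lemma gap_in_window (N : ℕ) : ∃ P : ℤ, 0 < P ∧ ∀ t : ℤ, ∃ x : ℤ,
    0 ≤ x ∧ x < P ∧ ∀ i : ℕ, i < N → ¬ Squarefree (x + i + t) := by
  obtain ⟨r, P, hP, h⟩ := nonsqfree_run N
  refine ⟨P, hP, fun t => ⟨(r - t) % P, Int.emod_nonneg _ hP.ne', Int.emod_lt_of_pos _ hP, ?_⟩⟩
  intro i hi
  have : (r - t) % P + i + t = r + (-((r - t) / P)) * P + i := by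
    rw [Int.emod_def]; ring
  rw [this]; exact h _ i hi

/-- Every element of the hull has arbitrarily long gaps (runs of `false`). -/
lemma hull_gap {y : ℤ → Bool} (hy : y ∈ SqfHull) (N : ℕ) :
    ∃ x : ℤ, ∀ i : ℕ, i < N → y (x + i) = false := by
  obtain ⟨P, hP, hwin⟩ := gap_in_window N
  set U : Set (ℤ → Bool) :=
    ⋂ j ∈ Finset.range (P.toNat + N), {g : ℤ → Bool | g (j : ℤ) = y (j : ℤ)} with hU
  have hUopen : IsOpen U := by
    apply isOpen_biInter_finset
    intro j _
    have : {g : ℤ → Bool | g (j : ℤ) = y (j : ℤ)}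
        = (fun g : ℤ → Bool => g (j : ℤ)) ⁻¹' {y (j : ℤ)} := by
      ext g; simp
    rw [this]
    exact (continuous_apply ((j : ℤ) : ℤ)).isOpen_preimage _ (isOpen_discrete _)
  have hyU : y ∈ U := by simp [hU]
  obtain ⟨f, hfU, t, hft⟩ := mem_closure_iff.mp hy U hUopen hyU
  obtain ⟨x, hx0, hxP, hgap⟩ := hwin t
  refine ⟨x, fun i hi => ?_⟩
  have hfx : f (x + i) = false := by
    by_contra hc
    have : f (x + i) = true := by
      cases hxi : f (x + i) with
      | false => exact absurd hxi hc
      | true => rfl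
    exact hgap i hi ((hft _).mp this)
  have hagree : f (x + i) = y (x + i) := by
    have hj : x.toNat + i ∈ Finset.range (P.toNat + N) := by
      have h1 : x.toNat < P.toNat := by omega
      simp only [Finset.mem_range]; omega
    have := Set.mem_iInter₂.mp hfU (x.toNat + i) hj
    simpa [Int.toNat_of_nonneg hx0] using this
  rw [← hagree, hfx]

/-- Every nonempty closed ℤ-invariant subset of the hull of the squarefree
integers contains the empty configuration; i.e. {∅} is the unique minimal
subsystem. -/
theorem sqfHull_unique_minimal (Y : Set (ℤ → Bool)) (hYX : Y ⊆ SqfHull)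
    (hne : Y.Nonempty) (hcl : IsClosed Y)
    (hinv : ∀ f ∈ Y, ∀ t : ℤ, (fun n : ℤ => f (n + t)) ∈ Y) :
    (fun _ : ℤ => false) ∈ Y := by
  obtain ⟨y, hy⟩ := hne
  have hgap : ∀ N : ℕ, ∃ x : ℤ, ∀ i : ℕ, i < 2 * N + 1 → y (x + i) = false :=
    fun N => hull_gap (hYX hy) (2 * N + 1)
  choose x hx using hgap
  set g : ℕ → (ℤ → Bool) := fun N => fun n : ℤ => y (n + (x N + N)) with hg
  have hgY : ∀ N, g N ∈ Y := fun N => hinv y hy (x N + N)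
  have hgval : ∀ N : ℕ, ∀ n : ℤ, -(N : ℤ) ≤ n → n ≤ N → g N n = false := by
    intro N n h1 h2
    have hiz : ((n + N).toNat : ℤ) = n + N := Int.toNat_of_nonneg (by omega)
    have hilt : (n + N).toNat < 2 * N + 1 := by omega
    have := hx N (n + N).toNat hilt
    rw [hiz] at this
    simpa [hg, show n + (x N + N) = x N + (n + N) by ring] using this
  have htend : Filter.Tendsto g Filter.atTop (nhds (fun _ : ℤ => false)) := by
    rw [tendsto_pi_nhds]
    intro n
    apply Filter.Tendsto.congr' _ tendsto_const_nhds
    filter_upwards [Filter.eventually_ge_atTop n.natAbs] with N hN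
    exact (hgval N n (by omega) (by omega)).symm
  exact hcl.mem_of_tendsto htend (Filter.Eventually.of_forall hgY)
end

section
/- Any continuous eigenfunction of the translation action on the orbit closure 𝕏 of the squarefree integers is constant: if f : 𝕏 → ℂ is continuous, f ≢ 0, and there exist λ_t ∈ ℂ with f(X - t) = λ_t f(X) for all X ∈ 𝕏 and t ∈ ℤ, then λ_t = 1 for all t and f is constant. In particular the system has trivial topological point spectrum. -/
lemma crt_run (K : ℕ) : ∃ r N : ℤ, 0 < N ∧ ∀ i : ℕ, i < K →
    ∃ d : ℕ, 1 < d ∧ ((d:ℤ)*(d:ℤ)) ∣ N ∧ ((d:ℤ)*(d:ℤ)) ∣ (r + i) := by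
  induction K with
  | zero => exact ⟨0, 1, one_pos, fun i hi => absurd hi (by omega)⟩
  | succ K ih =>
    obtain ⟨r, N, hN, hdiv⟩ := ih
    obtain ⟨p, hpgt, hp⟩ := Nat.exists_infinite_primes (N.natAbs + 1)
    have hpZ : Prime (p:ℤ) := Nat.prime_iff_prime_int.mp hp
    have hpdvd : ¬ (p:ℤ) ∣ N := by
      intro h
      have : p ∣ N.natAbs := Int.natCast_dvd.mp h
      have := Nat.le_of_dvd (by omega) this
      omega
    have hcop : IsCoprime N ((p:ℤ)*(p:ℤ)) := by
      have h1 : IsCoprime ((p:ℤ)) N := (hpZ.coprime_iff_not_dvd).mpr hpdvd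
      exact (h1.symm.mul_right h1.symm)
    obtain ⟨a, b, hab⟩ := hcop
    refine ⟨r + N * (a * (-(K:ℤ) - r)), N * ((p:ℤ)*(p:ℤ)), ?_, ?_⟩
    · exact mul_pos hN (mul_pos (by exact_mod_cast hp.pos) (by exact_mod_cast hp.pos))
    · intro i hi
      rcases Nat.lt_succ_iff_lt_or_eq.mp hi with h | h
      · obtain ⟨d, hd, hdN, hdr⟩ := hdiv i h
        exact ⟨d, hd, hdN.mul_right _, by
          have : r + N * (a * (-(K:ℤ) - r)) + (i:ℤ) = (r + i) + N * (a * (-(K:ℤ) - r)) := by ring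
          rw [this]
          exact dvd_add hdr (hdN.mul_right _)⟩
      · subst h
        refine ⟨p, hp.two_le, Dvd.intro_left _ rfl, ⟨(r + (i:ℤ)) * b, ?_⟩⟩
        linear_combination (-(r + (i:ℤ))) * hab

lemma not_squarefree_of_sq_dvd {d : ℕ} (hd : 1 < d) {m : ℤ} (h : ((d:ℤ)*(d:ℤ)) ∣ m) :
    ¬ Squarefree m := by
  intro hs
  have := hs (d:ℤ) h
  rw [Int.isUnit_iff] at this
  omega

/-- In every interval of length `N` there is a run of `K` consecutive
non-squarefree integers. -/
lemma exists_run (K : ℕ) : ∃ N : ℤ, 0 < N ∧ ∀ a : ℤ, ∃ m : ℤ,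
    a ≤ m ∧ m < a + N ∧ ∀ i : ℕ, i < K → ¬ Squarefree (m + i) := by
  obtain ⟨r, N, hN, hdiv⟩ := crt_run K
  refine ⟨N, hN, fun a => ?_⟩
  refine ⟨a + (r - a) % N, ?_, ?_, ?_⟩
  · have := Int.emod_nonneg (r - a) hN.ne'
    omega
  · have := Int.emod_lt_of_pos (r - a) hN
    omega
  · intro i hi
    obtain ⟨d, hd, hdN, hdr⟩ := hdiv i hi
    apply not_squarefree_of_sq_dvd hd
    have key : a + (r - a) % N + (i:ℤ) = (r + i) - N * ((r - a) / N) := by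
      have := Int.emod_add_mul_ediv (r - a) N
      linarith
    rw [key]
    exact dvd_sub hdr (hdN.mul_right _)

lemma sqf_shift_mem {X : ℤ → Bool} (hX : X ∈ SqfHull) (t : ℤ) :
    (fun n => X (n + t)) ∈ SqfHull := by
  set B : Set (ℤ → Bool) := {f : ℤ → Bool | ∃ t : ℤ, ∀ n : ℤ, f n = true ↔ Squarefree (n + t)}
  have hcont : Continuous (fun (g : ℤ → Bool) => (fun n => g (n + t))) :=
    continuous_pi fun n => continuous_apply (n + t)
  have himg : (fun (g : ℤ → Bool) => (fun n => g (n + t))) '' B ⊆ B := by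
    rintro _ ⟨g, ⟨s, hg⟩, rfl⟩
    exact ⟨t + s, fun n => by rw [hg (n + t), add_assoc]⟩
  have h1 : (fun n => X (n + t)) ∈ (fun (g : ℤ → Bool) => (fun n => g (n + t))) '' closure B :=
    ⟨X, hX, rfl⟩
  have h2 := image_closure_subset_closure_image hcont h1
  exact closure_mono himg h2

/-- Every element of the hull has arbitrarily long blocks of zeros. -/
lemma sqf_hull_approach {X : ℤ → Bool} (hX : X ∈ SqfHull) (L : ℕ) :
    ∃ s : ℤ, ∀ n : ℤ, n.natAbs ≤ L → X (n + s) = false := by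
  set B : Set (ℤ → Bool) := {f : ℤ → Bool | ∃ t : ℤ, ∀ n : ℤ, f n = true ↔ Squarefree (n + t)}
  obtain ⟨N, hN, hrun⟩ := exists_run (2 * L + 1)
  set F : Finset ℤ := Finset.Icc (-(L:ℤ)) (N + L) with hF
  set U : Set (ℤ → Bool) := (↑F : Set ℤ).pi (fun n => {X n}) with hU
  have hUopen : IsOpen U :=
    isOpen_set_pi F.finite_toSet (fun n _ => isOpen_discrete _)
  have hXU : X ∈ U := fun n _ => rfl
  have hX' : X ∈ closure B := hX
  obtain ⟨Y, hYU, hYB⟩ := _root_.mem_closure_iff.mp hX' U hUopen hXU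
  obtain ⟨tY, hY⟩ := hYB
  obtain ⟨m, hm1, hm2, hm3⟩ := hrun (tY - L)
  refine ⟨m - tY + L, fun n hn => ?_⟩
  have hn' : -(L:ℤ) ≤ n ∧ n ≤ L := by omega
  have hco : n + (m - tY + L) ∈ (↑F : Set ℤ) := by
    simp only [hF, Finset.coe_Icc, Set.mem_Icc]
    omega
  have hXY : X (n + (m - tY + L)) = Y (n + (m - tY + L)) := (hYU _ hco).symm
  rw [hXY]
  have hnsq : ¬ Squarefree ((n + (m - tY + L)) + tY) := by
    have h3 := hm3 (n + L).toNat (by omega)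
    have : (m + ((n + L).toNat : ℤ)) = (n + (m - tY + L)) + tY := by
      rw [Int.toNat_of_nonneg (by omega)]; ring
    rwa [this] at h3
  rw [← Bool.not_eq_true]
  rw [hY]
  exact hnsq

open Filter Topology in
/-- Any continuous eigenfunction of the translation action on the hull of the
squarefree integers has eigenvalue 1 and is constant: the system has trivial
topological point spectrum. -/
theorem sqfHull_trivial_point_spectrum (f : (ℤ → Bool) → ℂ)
    (hf : ContinuousOn f SqfHull)
    (hne : ∃ X ∈ SqfHull, f X ≠ 0)
    (lam : ℤ → ℂ)
    (heig : ∀ t : ℤ, ∀ X ∈ SqfHull, f (fun n : ℤ => X (n + t)) = lam t * f X) :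
    (∀ t : ℤ, lam t = 1) ∧ ∀ X ∈ SqfHull, ∀ Y ∈ SqfHull, f X = f Y := by
  set Z : ℤ → Bool := fun _ => false with hZdef
  -- construction of the approaching sequence for any X in the hull
  have approach : ∀ X ∈ SqfHull, ∃ s : ℕ → ℤ,
      Tendsto (fun L => (fun n => X (n + s L))) atTop (𝓝 Z) := by
    intro X hX
    choose s hs using fun L => sqf_hull_approach hX L
    refine ⟨s, ?_⟩
    rw [tendsto_pi_nhds]
    intro n
    refine Tendsto.congr' ?_ (tendsto_const_nhds : Tendsto _ _ (𝓝 false))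
    filter_upwards [eventually_ge_atTop n.natAbs] with L hL
    exact (hs L n hL).symm
  -- Z is in the hull
  obtain ⟨X₀, hX₀, hfX₀⟩ := hne
  obtain ⟨s₀, hs₀⟩ := approach X₀ hX₀
  have hmem₀ : ∀ L, (fun n => X₀ (n + s₀ L)) ∈ SqfHull := fun L => sqf_shift_mem hX₀ (s₀ L)
  have hZ : Z ∈ SqfHull :=
    isClosed_closure.mem_of_tendsto hs₀ (Eventually.of_forall hmem₀)
  -- general limit lemma : f of shifts tends to f Z
  have flim : ∀ X ∈ SqfHull, ∃ s : ℕ → ℤ,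
      Tendsto (fun L => f (fun n => X (n + s L))) atTop (𝓝 (f Z)) := by
    intro X hX
    obtain ⟨s, hs⟩ := approach X hX
    refine ⟨s, ?_⟩
    have hmem : ∀ L, (fun n => X (n + s L)) ∈ SqfHull := fun L => sqf_shift_mem hX (s L)
    have h1 : Tendsto (fun L => (fun n => X (n + s L))) atTop (𝓝[SqfHull] Z) :=
      tendsto_nhdsWithin_iff.mpr ⟨hs, Eventually.of_forall hmem⟩
    exact ((hf Z hZ).tendsto).comp h1
  -- eigenvalue identities at Z
  have hZinv : ∀ t : ℤ, f Z = lam t * f Z := by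
    intro t
    have := heig t Z hZ
    exact this
  by_cases hfZ : f Z = 0
  · -- contradiction case
    exfalso
    have hcpt : IsCompact SqfHull := (isClosed_closure).isCompact
    obtain ⟨C, hC⟩ := hcpt.exists_bound_of_continuousOn hf
    have hCpos : ‖f X₀‖ ≤ C := hC X₀ hX₀
    have hfX₀pos : 0 < ‖f X₀‖ := norm_pos_iff.mpr hfX₀
    obtain ⟨s, hs⟩ := flim X₀ hX₀
    -- lower bound : ‖f X₀‖^2 ≤ C * ‖f (shift X₀)‖ for each L
    have hlow : ∀ L : ℕ, ‖f X₀‖ * ‖f X₀‖ ≤ C * ‖f (fun n => X₀ (n + s L))‖ := by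
      intro L
      set g : ℤ → Bool := fun n => X₀ (n + s L) with hg
      have hgmem : g ∈ SqfHull := sqf_shift_mem hX₀ (s L)
      -- f X₀ = lam (-(s L)) * f g
      have hback : f X₀ = lam (-(s L)) * f g := by
        have h := heig (-(s L)) g hgmem
        have hgg : (fun n : ℤ => g (n + -(s L))) = X₀ := by
          funext n
          show X₀ (n + -(s L) + s L) = X₀ n
          congr 1
          ring
        rwa [hgg] at h
      -- ‖lam (-(s L))‖ * ‖f X₀‖ ≤ C
      have hfor : ‖lam (-(s L))‖ * ‖f X₀‖ ≤ C := by
        have h := heig (-(s L)) X₀ hX₀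
        have := hC (fun n : ℤ => X₀ (n + -(s L))) (sqf_shift_mem hX₀ (-(s L)))
        rw [h, norm_mul] at this
        exact this
      have hnorm0 : ‖f X₀‖ = ‖lam (-(s L))‖ * ‖f g‖ := by rw [hback, norm_mul]
      nlinarith [norm_nonneg (f g), norm_nonneg (f X₀), hnorm0, hfor]
    -- but f (shift X₀) → f Z = 0
    rw [hfZ] at hs
    have hnorm : Tendsto (fun L => ‖f (fun n => X₀ (n + s L))‖) atTop (𝓝 0) := by
      simpa using hs.norm
    have hCpos' : 0 < C := lt_of_lt_of_le hfX₀pos hCpos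
    have hev : ∀ᶠ L in atTop, ‖f (fun n => X₀ (n + s L))‖ < ‖f X₀‖ * ‖f X₀‖ / C := by
      have hpos : 0 < ‖f X₀‖ * ‖f X₀‖ / C := by positivity
      exact hnorm.eventually_lt_const hpos
    obtain ⟨L, hL⟩ := hev.exists
    have := hlow L
    have : C * ‖f (fun n => X₀ (n + s L))‖ < ‖f X₀‖ * ‖f X₀‖ := by
      calc C * ‖f (fun n => X₀ (n + s L))‖ < C * (‖f X₀‖ * ‖f X₀‖ / C) := by
              exact (mul_lt_mul_iff_right₀ hCpos').mpr hL
        _ = ‖f X₀‖ * ‖f X₀‖ := by field_simp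
    linarith [hlow L]
  · -- f Z ≠ 0 : eigenvalues are all 1
    have hlam : ∀ t : ℤ, lam t = 1 := by
      intro t
      have h := hZinv t
      have : (1 : ℂ) * f Z = lam t * f Z := by rw [one_mul]; exact h
      exact (mul_right_cancel₀ hfZ this).symm
    refine ⟨hlam, ?_⟩
    have hconst : ∀ X ∈ SqfHull, f X = f Z := by
      intro X hX
      obtain ⟨s, hs⟩ := flim X hX
      have heq : ∀ L, f (fun n => X (n + s L)) = f X := by
        intro L
        rw [heig (s L) X hX, hlam, one_mul]
      have : Tendsto (fun _ : ℕ => f X) atTop (𝓝 (f Z)) := by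
        refine Tendsto.congr (fun L => heq L) hs
      exact tendsto_nhds_unique tendsto_const_nhds this
    intro X hX Y hY
    rw [hconst X hX, hconst Y hY]
end

section
/- For squarefree integers, the density of the set {t ∈ ℤ : t + F ⊆ S} for a finite admissible set F ⊆ ℤ equals ∏_p (1 − |F mod p²|/p²), where S is the set of squarefree integers and the product runs over all primes; in particular this density is positive. -/
open Filter
open scoped Classical
open Topology

namespace SPF


lemma count_period {N : ℕ} [NeZero N] (Q : ZMod N → Prop) (a : ℤ) :
    ((Finset.Ico a (a + N)).filter (fun t : ℤ => Q ((t : ZMod N)))).card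
      = (Finset.univ.filter Q).card := by
  have hN : 0 < (N : ℤ) := by exact_mod_cast Nat.pos_of_ne_zero (NeZero.ne N)
  have key : ∀ r : ZMod N, ((a + ((r - (a : ZMod N)).val : ℤ) : ℤ) : ZMod N) = r := by
    intro r
    push_cast
    rw [ZMod.natCast_val, ZMod.cast_id]
    ring
  apply Finset.card_bij' (fun (t : ℤ) _ => ((t : ZMod N)))
    (fun (r : ZMod N) _ => a + ((r - (a : ZMod N)).val : ℤ))
  · intro t ht
    simp only [Finset.mem_filter] at ht ⊢
    exact ⟨Finset.mem_univ _, ht.2⟩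
  · intro r hr
    simp only [Finset.mem_filter] at hr ⊢
    constructor
    · simp only [Finset.mem_Ico]
      have h1 : (0:ℤ) ≤ ((r - (a : ZMod N)).val : ℤ) := Int.natCast_nonneg _
      have h2 : ((r - (a : ZMod N)).val : ℤ) < N := by
        exact_mod_cast ZMod.val_lt _
      omega
    · rw [key r]; exact hr.2
  · intro t ht
    simp only [Finset.mem_filter, Finset.mem_Ico] at ht
    have h1 : ((t : ZMod N) - (a : ZMod N)) = ((t - a : ℤ) : ZMod N) := by push_cast; ring
    rw [h1, ZMod.val_intCast, Int.emod_eq_of_lt (by omega) (by omega)]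
    ring
  · intro r _
    exact key r

lemma count_le_of_le {N : ℕ} [NeZero N] (Q : ZMod N → Prop) (a : ℤ) (L : ℕ) (hL : L ≤ N) :
    ((Finset.Ico a (a + L)).filter (fun t : ℤ => Q ((t : ZMod N)))).card
      ≤ (Finset.univ.filter Q).card := by
  apply Finset.card_le_card_of_injOn (fun t : ℤ => ((t : ZMod N)))
  · intro t ht
    simp only [Finset.mem_coe, Finset.mem_filter] at ht ⊢
    exact ⟨Finset.mem_univ _, ht.2⟩
  · intro s hs t ht h
    simp only [Finset.coe_filter, Set.mem_setOf_eq, Finset.mem_Ico] at hs ht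
    have hd : ((N : ℕ) : ℤ) ∣ t - s := ((ZMod.intCast_eq_intCast_iff (s:ℤ) (t:ℤ) N).mp h).dvd
    have hLN : (L:ℤ) ≤ (N:ℤ) := by exact_mod_cast hL
    have : t - s = 0 := Int.eq_zero_of_abs_lt_dvd hd (by rw [abs_lt]; constructor <;> omega)
    omega

lemma count_block {N : ℕ} [NeZero N] (Q : ZMod N → Prop) (a : ℤ) (q s : ℕ) :
    ((Finset.Ico a (a + (q * N + s : ℕ))).filter (fun t : ℤ => Q ((t : ZMod N)))).card
      = q * (Finset.univ.filter Q).card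
        + ((Finset.Ico a (a + s)).filter (fun t : ℤ => Q ((t : ZMod N)))).card := by
  induction q with
  | zero => simp
  | succ q ih =>
      have hsplit : Finset.Ico a (a + ((q+1) * N + s : ℕ))
          = Finset.Ico a (a + (q * N + s : ℕ)) ∪
            Finset.Ico (a + (q * N + s : ℕ)) ((a + (q * N + s : ℕ)) + N) := by
        rw [Finset.Ico_union_Ico_eq_Ico]
        · congr 1
          push_cast; ring
        · have : (0:ℤ) ≤ ((q * N + s : ℕ) : ℤ) := Int.natCast_nonneg _
          omega
        · have : (0:ℤ) ≤ ((N:ℕ) : ℤ) := Int.natCast_nonneg _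
          omega
      rw [hsplit, Finset.filter_union, Finset.card_union_of_disjoint
        (Finset.disjoint_filter_filter (Finset.Ico_disjoint_Ico_consecutive _ _ _)), ih,
        count_period]
      ring

lemma nat_div_decomp (L N : ℕ) : L = L / N * N + L % N := by
  conv_lhs => rw [← Nat.div_add_mod L N]
  ring

lemma count_upper {N : ℕ} [NeZero N] (Q : ZMod N → Prop) (a : ℤ) (L : ℕ) :
    ((Finset.Ico a (a + L)).filter (fun t : ℤ => Q ((t : ZMod N)))).card
      ≤ (L / N + 1) * (Finset.univ.filter Q).card := by
  have hN : 0 < N := Nat.pos_of_ne_zero (NeZero.ne N)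
  calc ((Finset.Ico a (a + L)).filter (fun t : ℤ => Q ((t : ZMod N)))).card
      = (L/N) * (Finset.univ.filter Q).card
        + ((Finset.Ico a (a + ((L % N : ℕ) : ℤ))).filter (fun t : ℤ => Q ((t : ZMod N)))).card := by
        conv_lhs => rw [nat_div_decomp L N]
        exact count_block Q a _ _
    _ ≤ (L/N) * (Finset.univ.filter Q).card + (Finset.univ.filter Q).card := by
        have := count_le_of_le Q a (L % N) (le_of_lt (Nat.mod_lt _ hN))
        omega
    _ = (L / N + 1) * (Finset.univ.filter Q).card := by ring

lemma count_lower {N : ℕ} [NeZero N] (Q : ZMod N → Prop) (a : ℤ) (L : ℕ) :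
    (L / N) * (Finset.univ.filter Q).card
      ≤ ((Finset.Ico a (a + L)).filter (fun t : ℤ => Q ((t : ZMod N)))).card := by
  calc (L/N) * (Finset.univ.filter Q).card
      ≤ (L/N) * (Finset.univ.filter Q).card
        + ((Finset.Ico a (a + ((L % N : ℕ) : ℤ))).filter (fun t : ℤ => Q ((t : ZMod N)))).card :=
        Nat.le_add_right _ _
    _ = _ := by
        conv_rhs => rw [nat_div_decomp L N]
        exact (count_block Q a _ _).symm




noncomputable def fF (F : Finset ℤ) (p : ℕ) : ℕ :=
  (F.image (fun x : ℤ => (x : ZMod (p ^ 2)))).card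

def badp (F : Finset ℤ) (p : ℕ) (t : ℤ) : Prop := ∃ x ∈ F, ((p : ℤ)) ^ 2 ∣ t + x

lemma badp_congr (F : Finset ℤ) (p : ℕ) {N : ℕ} (hpN : p ^ 2 ∣ N) {t s : ℤ}
    (h : ((N : ℕ) : ℤ) ∣ t - s) : badp F p t ↔ badp F p s := by
  have hd : ((p:ℤ))^2 ∣ t - s := by
    refine dvd_trans ?_ h
    exact_mod_cast Int.natCast_dvd_natCast.mpr (by exact_mod_cast hpN)
  constructor <;> rintro ⟨x, hx, hdvd⟩ <;> refine ⟨x, hx, ?_⟩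
  · rw [show s + x = (t + x) - (t - s) by ring]
    exact dvd_sub hdvd hd
  · rw [show t + x = (s + x) + (t - s) by ring]
    exact dvd_add hdvd hd

-- good residues predicate
def QP (F : Finset ℤ) (P : Finset ℕ) (N : ℕ) [NeZero N] (r : ZMod N) : Prop :=
  ∀ p ∈ P, ¬ badp F p ((r.val : ℤ))

lemma QP_iff (F : Finset ℤ) (P : Finset ℕ) (N : ℕ) [NeZero N]
    (hdvd : ∀ p ∈ P, p ^ 2 ∣ N) (t : ℤ) :
    QP F P N ((t : ZMod N)) ↔ ∀ p ∈ P, ¬ badp F p t := by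
  have hcong : ((N:ℕ) : ℤ) ∣ (((t : ZMod N).val : ℤ)) - t := by
    have := ZMod.val_intCast (n := N) t
    have h2 : (((t : ZMod N).val : ℤ)) = t % N := this
    rw [h2]
    have h3 := Int.mul_ediv_add_emod t N
    exact ⟨-(t / N), by linarith⟩
  constructor
  · intro h p hp
    rw [← badp_congr F p (hdvd p hp) hcong]
    exact h p hp
  · intro h p hp
    rw [badp_congr F p (hdvd p hp) hcong]
    exact h p hp

lemma single_prime_count (F : Finset ℤ) (p : ℕ) (hp : p.Prime) :
    haveI : NeZero (p ^ 2) := ⟨pow_ne_zero _ hp.ne_zero⟩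
    (Finset.univ.filter (fun r : ZMod (p ^ 2) => ¬ badp F p ((r.val : ℤ)))).card
      = p ^ 2 - fF F p := by
  haveI : NeZero (p ^ 2) := ⟨pow_ne_zero _ hp.ne_zero⟩
  have key : Finset.univ.filter (fun r : ZMod (p ^ 2) => badp F p ((r.val : ℤ)))
      = F.image (fun x : ℤ => ((-x : ℤ) : ZMod (p ^ 2))) := by
    ext r
    rw [Finset.mem_filter]
    simp only [Finset.mem_univ, true_and, Finset.mem_image, badp]
    constructor
    · rintro ⟨x, hx, hdvd⟩
      refine ⟨x, hx, ?_⟩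
      have h0 : (((r.val : ℤ) + x : ℤ) : ZMod (p^2)) = 0 := by
        rw [ZMod.intCast_zmod_eq_zero_iff_dvd]
        exact_mod_cast hdvd
      push_cast at h0
      rw [ZMod.natCast_val, ZMod.cast_id] at h0
      push_cast
      linear_combination -h0
    · rintro ⟨x, hx, hr⟩
      refine ⟨x, hx, ?_⟩
      have h0 : (((r.val : ℤ) + x : ℤ) : ZMod (p^2)) = 0 := by
        push_cast
        rw [ZMod.natCast_val, ZMod.cast_id, ← hr]
        push_cast
        ring
      rw [ZMod.intCast_zmod_eq_zero_iff_dvd] at h0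
      exact_mod_cast h0
  have himg : (F.image (fun x : ℤ => ((-x : ℤ) : ZMod (p ^ 2)))).card = fF F p := by
    have : (fun x : ℤ => ((-x : ℤ) : ZMod (p ^ 2)))
        = (fun y : ZMod (p^2) => -y) ∘ (fun x : ℤ => (x : ZMod (p ^ 2))) := by
      funext x; simp
    rw [this, ← Finset.image_image, Finset.card_image_of_injective _ neg_injective]
    rfl
  have hnot := Finset.card_filter_add_card_filter_not
    (s := (Finset.univ : Finset (ZMod (p^2)))) (fun r : ZMod (p ^ 2) => badp F p ((r.val : ℤ)))
  rw [key, himg] at hnot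
  have hcard : (Finset.univ : Finset (ZMod (p^2))).card = p ^ 2 := by
    rw [Finset.card_univ, ZMod.card]
  omega



lemma crt_count (F : Finset ℤ) (P : Finset ℕ) (hP : ∀ p ∈ P, p.Prime) :
    ∀ (N : ℕ), N = ∏ p ∈ P, p^2 → ∀ [NeZero N],
    (Finset.univ.filter (QP F P N)).card = ∏ p ∈ P, (p^2 - fF F p) := by
  induction P using Finset.induction_on with
  | empty =>
      intro N hN _
      subst hN
      simp only [Finset.prod_empty]
      have : ∀ r : ZMod 1, QP F ∅ 1 r := by intro r p hp; simp at hp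
      have h1 : Finset.filter (QP F ∅ 1) Finset.univ = Finset.univ :=
        Finset.filter_true_of_mem (fun r _ => this r)
      exact (congrArg Finset.card h1).trans (by simp)
  | @insert q s hq ih =>
      intro N hN inst
      have hqP : q.Prime := hP q (Finset.mem_insert_self q s)
      have hsP : ∀ p ∈ s, p.Prime := fun p hp => hP p (Finset.mem_insert_of_mem hp)
      rw [Finset.prod_insert hq] at hN
      subst hN
      set Ns := ∏ p ∈ s, p^2 with hNs
      haveI : NeZero Ns := ⟨by
        intro h0
        exact (NeZero.ne (q^2 * Ns)) (by rw [h0, mul_zero])⟩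
      haveI : NeZero (q^2) := ⟨pow_ne_zero _ hqP.ne_zero⟩
      have hcop : Nat.Coprime (q^2) Ns := by
        apply Nat.Coprime.prod_right
        intro p hp
        exact Nat.Coprime.pow _ _ ((Nat.coprime_primes hqP (hsP p hp)).mpr
          (fun h => hq (h ▸ hp)))
      set e := ZMod.chineseRemainder hcop with he
      have hpoint : ∀ r : ZMod (q^2 * Ns),
          QP F (insert q s) (q^2 * Ns) r ↔
            (¬ badp F q (((e r).1.val : ℤ))) ∧ QP F s Ns ((e r).2) := by
        intro r
        set z : ℤ := (r.val : ℤ) with hz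
        have hrz : ((z : ℤ) : ZMod (q^2 * Ns)) = r := by
          rw [hz]
          push_cast
          rw [ZMod.natCast_val, ZMod.cast_id]
        have her : e r = ((z : ZMod (q^2)), (z : ZMod Ns)) := by
          rw [← hrz, map_intCast]
          rfl
        have h1 : (((e r).1.val : ℤ)) - z = z % ((q^2 : ℕ) : ℤ) - z := by
          rw [her, ZMod.val_intCast]
        have h2 : (((e r).2.val : ℤ)) - z = z % ((Ns : ℕ) : ℤ) - z := by
          rw [her, ZMod.val_intCast]
        have hd1 : (((q^2 : ℕ)) : ℤ) ∣ (((e r).1.val : ℤ)) - z := by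
          rw [h1]
          have h3 := Int.mul_ediv_add_emod z ((q^2 : ℕ) : ℤ)
          exact ⟨-(z / ((q^2 : ℕ) : ℤ)), by push_cast at h3 ⊢; linarith⟩
        have hd2 : ((Ns : ℕ) : ℤ) ∣ (((e r).2.val : ℤ)) - z := by
          rw [h2]
          have h3 := Int.mul_ediv_add_emod z ((Ns : ℕ) : ℤ)
          exact ⟨-(z / ((Ns : ℕ) : ℤ)), by push_cast at h3 ⊢; linarith⟩
        constructor
        · intro h
          refine ⟨?_, ?_⟩
          · rw [badp_congr F q (dvd_refl (q^2)) hd1]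
            exact h q (Finset.mem_insert_self q s)
          · intro p hp
            rw [badp_congr F p (Finset.dvd_prod_of_mem (fun p => p^2) hp) hd2]
            exact h p (Finset.mem_insert_of_mem hp)
        · rintro ⟨hq1, hs1⟩ p hp
          rcases Finset.mem_insert.mp hp with rfl | hp
          · exact fun hbad => hq1 ((badp_congr F p (dvd_refl (p^2)) hd1).mpr hbad)
          · have h5 := hs1 p hp
            exact fun hbad =>
              h5 ((badp_congr F p (Finset.dvd_prod_of_mem (fun p => p^2) hp) hd2).mpr hbad)
      have hbij : (Finset.univ.filter (QP F (insert q s) (q^2 * Ns))).card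
          = (Finset.univ.filter (fun z : ZMod (q^2) × ZMod Ns =>
              (¬ badp F q ((z.1.val : ℤ))) ∧ QP F s Ns z.2)).card := by
        apply Finset.card_bij' (fun r _ => e r) (fun z _ => e.symm z)
        · intro r hr
          simp only [Finset.mem_filter, Finset.mem_univ, true_and] at hr ⊢
          exact (hpoint r).mp hr
        · intro z hz
          simp only [Finset.mem_filter, Finset.mem_univ, true_and] at hz ⊢
          rw [hpoint (e.symm z), RingEquiv.apply_symm_apply]
          exact hz
        · intro r _; exact e.symm_apply_apply r
        · intro z _; exact e.apply_symm_apply z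
      have hprod : (Finset.univ.filter (fun z : ZMod (q^2) × ZMod Ns =>
              (¬ badp F q ((z.1.val : ℤ))) ∧ QP F s Ns z.2)).card
          = (Finset.univ.filter (fun a : ZMod (q^2) => ¬ badp F q ((a.val : ℤ)))).card
            * (Finset.univ.filter (QP F s Ns)).card := by
        rw [← Finset.univ_product_univ,
          Finset.filter_product (fun a : ZMod (q^2) => ¬ badp F q ((a.val : ℤ)))
            (QP F s Ns), Finset.card_product]
      rw [hbij, hprod, single_prime_count F q hqP, ih hsP Ns rfl, Finset.prod_insert hq]





lemma summable_aux : Summable (fun n : ℕ => (1:ℝ)/(n:ℝ)^2) :=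
  Real.summable_one_div_nat_pow.mpr one_lt_two

noncomputable def tailS (y : ℕ) : ℝ := ∑' n : ℕ, (1:ℝ)/((n + y : ℕ):ℝ)^2

lemma tail_tendsto : Tendsto tailS atTop (𝓝 0) := by
  unfold tailS
  exact tendsto_sum_nat_add (fun n : ℕ => (1:ℝ)/(n:ℝ)^2)

lemma sum_tail_bound (y : ℕ) (s : Finset ℕ) (hs : ∀ p ∈ s, y ≤ p) :
    ∑ p ∈ s, (1:ℝ)/(p:ℝ)^2 ≤ tailS y := by
  have h1 : ∑ p ∈ s, (1:ℝ)/(p:ℝ)^2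
      = ∑ k ∈ s.image (· - y), (1:ℝ)/((k + y : ℕ):ℝ)^2 := by
    rw [Finset.sum_image (by
      intro a ha b hb hab
      have := hs a ha; have := hs b hb; simp only at hab; omega)]
    apply Finset.sum_congr rfl
    intro p hp
    have := hs p hp
    have hpy : p - y + y = p := by omega
    rw [hpy]
  rw [h1]
  unfold tailS
  exact Summable.sum_le_tsum (f := fun k : ℕ => (1:ℝ)/((k + y : ℕ):ℝ)^2) _
    (fun i _ => by positivity) (summable_aux.comp_injective (add_left_injective y))

noncomputable def gP (F : Finset ℤ) (p : Nat.Primes) : ℝ :=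
  1 - (fF F (p : ℕ) : ℝ) / ((p : ℕ) : ℝ)^2

variable (F : Finset ℤ)
variable (hF : ∀ p : ℕ, p.Prime → (F.image (fun x : ℤ => (x : ZMod (p ^ 2)))).card < p ^ 2)

lemma fF_le_card (p : ℕ) : fF F p ≤ F.card := Finset.card_image_le

include hF in
lemma fF_lt (p : ℕ) (hp : p.Prime) : fF F p < p ^ 2 := hF p hp

include hF in
lemma gP_pos (p : Nat.Primes) : 0 < gP F p := by
  have h := fF_lt F hF p p.2
  have hp2 : (0:ℝ) < ((p:ℕ):ℝ)^2 := by
    have := p.2.pos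
    positivity
  have : (fF F (p:ℕ) : ℝ) < ((p:ℕ):ℝ)^2 := by exact_mod_cast h
  have := (div_lt_one hp2).mpr this
  unfold gP
  linarith

lemma gP_le_one (p : Nat.Primes) : gP F p ≤ 1 := by
  have hp2 : (0:ℝ) < ((p:ℕ):ℝ)^2 := by
    have := p.2.pos
    positivity
  have : 0 ≤ (fF F (p:ℕ) : ℝ) / ((p:ℕ):ℝ)^2 := by positivity
  unfold gP
  linarith

include hF in
lemma log_summable : Summable (fun p : Nat.Primes => Real.log (gP F p)) := by
  apply Summable.of_norm_bounded_eventually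
    (g := fun p : Nat.Primes => 2 * (F.card:ℝ) * (1/((p:ℕ):ℝ)^2))
  · exact (summable_aux.mul_left (2 * (F.card:ℝ))).subtype _
  · rw [Filter.eventually_cofinite]
    apply Set.Finite.subset (Set.Finite.preimage
      (Set.injOn_of_injective (fun a b h => Subtype.ext h))
      (Set.finite_Iio (2 * F.card)))
    intro p hp
    simp only [Set.mem_preimage, Set.mem_Iio]
    by_contra hcon
    push_neg at hcon
    apply hp
    -- now 2 * F.card ≤ p, hence 2 * F.card ≤ p^2
    have hple : 2 * F.card ≤ (p:ℕ)^2 := le_trans hcon (by nlinarith [p.2.pos])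
    have hp2 : (0:ℝ) < ((p:ℕ):ℝ)^2 := by
      have := p.2.pos
      positivity
    have hfle : (fF F (p:ℕ) : ℝ) ≤ (F.card : ℝ) := by exact_mod_cast fF_le_card F (p:ℕ)
    have hcle : (2:ℝ) * F.card ≤ ((p:ℕ):ℝ)^2 := by exact_mod_cast hple
    set a : ℝ := (fF F (p:ℕ) : ℝ) / ((p:ℕ):ℝ)^2 with ha
    have ha0 : 0 ≤ a := by positivity
    have hahalf : a ≤ 1/2 := by
      rw [ha, div_le_iff₀ hp2]
      nlinarith
    have hg : gP F p = 1 - a := rfl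
    have hgpos : (0:ℝ) < 1 - a := by linarith
    have hlog : Real.log (gP F p) ≤ 0 := by
      rw [hg]
      exact Real.log_nonpos (by linarith) (by linarith)
    have hbound : -Real.log (gP F p) ≤ 2 * a := by
      rw [hg, ← Real.log_inv]
      have h1 : Real.log (1-a)⁻¹ ≤ (1-a)⁻¹ - 1 :=
        Real.log_le_sub_one_of_pos (by positivity)
      have h2 : (1-a)⁻¹ ≤ 1 + 2 * a := by
        rw [inv_eq_one_div, div_le_iff₀ hgpos]
        nlinarith
      linarith
    rw [Real.norm_eq_abs, abs_of_nonpos hlog]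
    have hac : a ≤ (F.card:ℝ) / ((p:ℕ):ℝ)^2 := by
      rw [ha]; gcongr
    calc -Real.log (gP F p) ≤ 2 * a := hbound
      _ ≤ 2 * (F.card:ℝ) * (1/((p:ℕ):ℝ)^2) := by
          rw [mul_one_div, mul_div_assoc]
          linarith



include hF in
lemma hasProdG : HasProd (gP F) (∏' p : Nat.Primes, gP F p) := by
  have h := Real.hasProd_of_hasSum_log (fun p => gP_pos F hF p) (log_summable F hF).hasSum
  exact h.multipliable.hasProd

include hF in
lemma tprod_pos : 0 < ∏' p : Nat.Primes, gP F p := by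
  have h2 := Real.rexp_tsum_eq_tprod (fun p => gP_pos F hF p) (log_summable F hF)
  rw [← h2]
  exact Real.exp_pos _

noncomputable def sFin (y : ℕ) : Finset Nat.Primes :=
  (y.primesBelow).attach.map
    ⟨fun p => (⟨p.1, Nat.prime_of_mem_primesBelow p.2⟩ : Nat.Primes),
     by
       intro a b hab
       have h2 : ((⟨a.1, Nat.prime_of_mem_primesBelow a.2⟩ : Nat.Primes) : ℕ)
           = ((⟨b.1, Nat.prime_of_mem_primesBelow b.2⟩ : Nat.Primes) : ℕ) :=
         congrArg (fun q : Nat.Primes => (q : ℕ)) hab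
       exact Subtype.ext h2⟩

lemma mem_sFin (y : ℕ) (q : Nat.Primes) : q ∈ sFin y ↔ (q : ℕ) < y := by
  unfold sFin
  simp only [Finset.mem_map, Finset.mem_attach, true_and, Function.Embedding.coeFn_mk]
  constructor
  · rintro ⟨a, ha⟩
    have : (a.1 : ℕ) = (q : ℕ) := congrArg Subtype.val ha
    have := a.2
    rw [Nat.mem_primesBelow] at this
    omega
  · intro hlt
    refine ⟨⟨(q : ℕ), Nat.mem_primesBelow.mpr ⟨hlt, q.2⟩⟩, ?_⟩
    exact Subtype.ext rfl

lemma sFin_tendsto : Tendsto sFin atTop atTop := by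
  apply tendsto_atTop_finset_of_monotone
  · intro y y' h q hq
    rw [mem_sFin] at *
    omega
  · intro q
    exact ⟨(q : ℕ) + 1, (mem_sFin _ q).mpr (Nat.lt_succ_self _)⟩

lemma prod_sFin (y : ℕ) :
    ∏ p ∈ sFin y, gP F p
      = ∏ p ∈ y.primesBelow, (1 - (fF F p : ℝ) / ((p : ℕ) : ℝ)^2) := by
  unfold sFin
  rw [Finset.prod_map]
  rw [← Finset.prod_attach (y.primesBelow) (fun p => (1 - (fF F p : ℝ) / ((p : ℕ) : ℝ)^2))]
  rfl

include hF in
lemma prodBelow_tendsto :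
    Tendsto (fun y : ℕ => ∏ p ∈ y.primesBelow, (1 - (fF F p : ℝ) / ((p : ℕ) : ℝ)^2))
      atTop (𝓝 (∏' p : Nat.Primes, gP F p)) := by
  have h := (hasProdG F hF).comp sFin_tendsto
  apply h.congr
  intro y
  exact prod_sFin F y


end SPF

namespace SPF

noncomputable def NyD (y : ℕ) : ℕ := ∏ p ∈ y.primesBelow, p ^ 2

noncomputable def kyD (F : Finset ℤ) (y : ℕ) : ℕ :=
  ∏ p ∈ y.primesBelow, (p ^ 2 - fF F p)

lemma NyD_pos (y : ℕ) : 0 < NyD y :=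
  Finset.prod_pos (fun p hp => pow_pos (Nat.prime_of_mem_primesBelow hp).pos _)

lemma kyD_le (F : Finset ℤ) (y : ℕ) : kyD F y ≤ NyD y :=
  Finset.prod_le_prod' (fun p _ => Nat.sub_le _ _)

lemma fcard {α : Type*} (s : Finset α) (p : α → Prop) (i1 i2 : DecidablePred p) :
    (@Finset.filter α p i1 s).card = (@Finset.filter α p i2 s).card := by
  have h : i1 = i2 := Subsingleton.elim i1 i2
  subst h
  rfl

lemma Icc_eq_Ico (R : ℕ) :
    Finset.Icc (-(R:ℤ)) (R:ℤ) = Finset.Ico (-(R:ℤ)) (-(R:ℤ) + ((2*R+1 : ℕ) : ℤ)) := by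
  have h : (-(R:ℤ) + ((2*R+1 : ℕ) : ℤ)) = (R:ℤ) + 1 := by push_cast; ring
  rw [h]
  rfl

lemma main_count (F : Finset ℤ) (y R : ℕ) :
    (2*R+1) / NyD y * kyD F y
      ≤ ((Finset.Icc (-(R:ℤ)) (R:ℤ)).filter
          (fun t : ℤ => ∀ p ∈ y.primesBelow, ¬ badp F p t)).card
    ∧ ((Finset.Icc (-(R:ℤ)) (R:ℤ)).filter
          (fun t : ℤ => ∀ p ∈ y.primesBelow, ¬ badp F p t)).card
      ≤ ((2*R+1) / NyD y + 1) * kyD F y := by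
  haveI : NeZero (NyD y) := ⟨(NyD_pos y).ne'⟩
  have hdvd : ∀ p ∈ y.primesBelow, p ^ 2 ∣ NyD y :=
    fun p hp => Finset.dvd_prod_of_mem _ hp
  have hfeq : (Finset.Icc (-(R:ℤ)) (R:ℤ)).filter
        (fun t : ℤ => ∀ p ∈ y.primesBelow, ¬ badp F p t)
      = (Finset.Ico (-(R:ℤ)) (-(R:ℤ) + ((2*R+1 : ℕ) : ℤ))).filter
          (fun t : ℤ => QP F y.primesBelow (NyD y) ((t : ZMod (NyD y)))) := by
    rw [Icc_eq_Ico R]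
    exact Finset.filter_congr (fun t _ => (QP_iff F y.primesBelow (NyD y) hdvd t).symm)
  have hk := crt_count F y.primesBelow (fun p hp => Nat.prime_of_mem_primesBelow hp)
    (NyD y) rfl
  constructor
  · rw [hfeq]
    unfold kyD
    rw [← hk]
    exact count_lower _ _ _
  · rw [hfeq]
    unfold kyD
    rw [← hk]
    exact count_upper _ _ _

lemma single_count (F : Finset ℤ) (p : ℕ) (hp : p.Prime) (x : ℤ) (R : ℕ) :
    ((Finset.Icc (-(R:ℤ)) (R:ℤ)).filter (fun t : ℤ => ((p:ℤ))^2 ∣ t + x)).card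
      ≤ (2*R+1) / (p^2) + 1 := by
  haveI : NeZero (p^2) := ⟨pow_ne_zero _ hp.ne_zero⟩
  have hfeq : (Finset.Icc (-(R:ℤ)) (R:ℤ)).filter (fun t : ℤ => ((p:ℤ))^2 ∣ t + x)
      = (Finset.Ico (-(R:ℤ)) (-(R:ℤ) + ((2*R+1 : ℕ) : ℤ))).filter
          (fun t : ℤ => ((t : ZMod (p^2))) = ((-x : ℤ) : ZMod (p^2))) := by
    rw [Icc_eq_Ico R]
    apply Finset.filter_congr
    intro t _
    constructor
    · intro hdvd
      have h0 : (((t + x : ℤ)) : ZMod (p^2)) = 0 := by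
        rw [ZMod.intCast_zmod_eq_zero_iff_dvd]
        exact_mod_cast hdvd
      push_cast at h0 ⊢
      linear_combination h0
    · intro heq
      have h0 : (((t + x : ℤ)) : ZMod (p^2)) = 0 := by
        push_cast at heq ⊢
        linear_combination heq
      rw [ZMod.intCast_zmod_eq_zero_iff_dvd] at h0
      exact_mod_cast h0
  rw [hfeq]
  have h1 := count_upper (N := p^2) (fun r => r = ((-x : ℤ) : ZMod (p^2))) (-(R:ℤ)) (2*R+1)
  have h2 : ∀ (inst : DecidablePred (fun r : ZMod (p^2) => r = ((-x : ℤ) : ZMod (p^2)))),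
      (@Finset.filter _ _ inst Finset.univ).card ≤ 1 := by
    intro inst
    apply Finset.card_le_one.mpr
    intro a ha b hb
    rw [Finset.mem_filter] at ha hb
    rw [ha.2, hb.2]
  exact le_trans (le_of_eq (fcard _ _ _ _))
    (le_trans h1 (le_trans (Nat.mul_le_mul_left _ (h2 _)) (le_of_eq (mul_one _))))

lemma sqfree_imp {z : ℤ} (h : Squarefree z) (p : ℕ) (hp : p.Prime) :
    ¬ ((p:ℤ))^2 ∣ z := by
  intro hdvd
  rw [pow_two] at hdvd
  have h2 : IsUnit ((p:ℤ)) := h (p:ℤ) hdvd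
  have h3 := hp.two_le
  rcases Int.isUnit_iff.mp h2 with h4 | h4 <;> omega

lemma exists_prime_sq_dvd {z : ℤ} (h : ¬ Squarefree z) :
    ∃ p : ℕ, p.Prime ∧ ((p:ℤ))^2 ∣ z := by
  rw [← Int.squarefree_natAbs, Nat.squarefree_iff_prime_squarefree] at h
  push_neg at h
  obtain ⟨p, hp, hdvd⟩ := h
  refine ⟨p, hp, ?_⟩
  have h2 : ((p*p : ℕ) : ℤ) ∣ z := by
    rw [← Int.natAbs_dvd_natAbs, Int.natAbs_natCast]
    exact hdvd
  push_cast at h2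
  rwa [← pow_two] at h2

end SPF

namespace SPF

lemma tailS_nonneg (y : ℕ) : 0 ≤ tailS y := by
  unfold tailS
  exact tsum_nonneg (fun n => by positivity)

lemma nat_lt_div_succ (a b : ℕ) (hb : 0 < b) : a < (a/b + 1) * b := by
  have h1 := Nat.div_add_mod a b
  have h2 := Nat.mod_lt a hb
  calc a = b * (a/b) + a % b := h1.symm
    _ < b * (a/b) + b := by omega
    _ = (a/b + 1) * b := by ring

variable (F : Finset ℤ)
variable (hF : ∀ p : ℕ, p.Prime → (F.image (fun x : ℤ => (x : ZMod (p ^ 2)))).card < p ^ 2)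

include hF in
lemma factor_nonneg (p : ℕ) (hp : p.Prime) :
    0 ≤ 1 - (fF F p : ℝ) / ((p:ℕ) : ℝ)^2 := by
  have h := hF p hp
  have hp2 : (0:ℝ) < ((p:ℕ):ℝ)^2 := by
    have := hp.pos
    positivity
  have hle : (fF F p : ℝ) ≤ ((p:ℕ):ℝ)^2 := by
    have h2 : ((p:ℕ):ℝ)^2 = ((p^2 : ℕ) : ℝ) := by push_cast; ring
    rw [h2]
    exact_mod_cast h.le
  have := div_le_one_of_le₀ hle hp2.le
  linarith

lemma factor_le_one (p : ℕ) (hp : p.Prime) :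
    1 - (fF F p : ℝ) / ((p:ℕ) : ℝ)^2 ≤ 1 := by
  have hp2 : (0:ℝ) < ((p:ℕ):ℝ)^2 := by
    have := hp.pos
    positivity
  have : (0:ℝ) ≤ (fF F p : ℝ) / ((p:ℕ):ℝ)^2 := by positivity
  linarith

include hF in
lemma kyD_eq (y : ℕ) :
    (kyD F y : ℝ)
      = (∏ p ∈ y.primesBelow, (1 - (fF F p : ℝ) / ((p:ℕ) : ℝ)^2)) * (NyD y : ℝ) := by
  unfold kyD NyD
  rw [Nat.cast_prod, Nat.cast_prod, ← Finset.prod_mul_distrib]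
  apply Finset.prod_congr rfl
  intro p hp
  have hprime := Nat.prime_of_mem_primesBelow hp
  have hle : fF F p ≤ p^2 := (hF p hprime).le
  have hppos : (0:ℝ) < ((p:ℕ):ℝ)^2 := by
    have := hprime.pos
    positivity
  rw [Nat.cast_sub hle]
  push_cast
  field_simp
  rw [mul_sub, mul_one, mul_div_cancel₀ (fF F p : ℝ) hppos.ne']

include hF in
lemma C_bounds (y R : ℕ) :
    |(((Finset.Icc (-(R:ℤ)) (R:ℤ)).filter
        (fun t : ℤ => ∀ p ∈ y.primesBelow, ¬ badp F p t)).card : ℝ)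
      - (2*(R:ℝ)+1) * (∏ p ∈ y.primesBelow, (1 - (fF F p : ℝ) / ((p:ℕ) : ℝ)^2))|
      ≤ (NyD y : ℝ) := by
  obtain ⟨hlo, hhi⟩ := main_count F y R
  set Py : ℝ := ∏ p ∈ y.primesBelow, (1 - (fF F p : ℝ) / ((p:ℕ) : ℝ)^2) with hPy
  have hkN := kyD_eq F hF y
  rw [← hPy] at hkN
  have hNy0 : (0:ℝ) < (NyD y : ℝ) := by exact_mod_cast NyD_pos y
  have hky0 : (0:ℝ) ≤ (kyD F y : ℝ) := by positivity
  have hkyNy : (kyD F y : ℝ) ≤ (NyD y : ℝ) := by exact_mod_cast kyD_le F y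
  have hq1 : (((2*R+1) / NyD y : ℕ) : ℝ) ≤ (2*(R:ℝ)+1) / (NyD y : ℝ) := by
    have h := Nat.cast_div_le (α := ℝ) (m := 2*R+1) (n := NyD y)
    have h2 : ((2*R+1 : ℕ) : ℝ) = 2*(R:ℝ)+1 := by push_cast; ring
    rwa [h2] at h
  have hq2 : (2*(R:ℝ)+1) < ((((2*R+1) / NyD y : ℕ) : ℝ) + 1) * (NyD y : ℝ) := by
    have h := nat_lt_div_succ (2*R+1) (NyD y) (NyD_pos y)
    have h2 : ((2*R+1 : ℕ) : ℝ) < ((((2*R+1) / NyD y + 1 : ℕ)) : ℝ) * ((NyD y : ℕ) : ℝ) := by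
      exact_mod_cast h
    push_cast at h2 ⊢
    linarith
  have hCr : ((((2*R+1) / NyD y : ℕ)) : ℝ) * (kyD F y : ℝ)
      ≤ (((Finset.Icc (-(R:ℤ)) (R:ℤ)).filter
          (fun t : ℤ => ∀ p ∈ y.primesBelow, ¬ badp F p t)).card : ℝ) := by
    exact_mod_cast hlo
  have hCu : (((Finset.Icc (-(R:ℤ)) (R:ℤ)).filter
          (fun t : ℤ => ∀ p ∈ y.primesBelow, ¬ badp F p t)).card : ℝ)
      ≤ (((((2*R+1) / NyD y : ℕ)) : ℝ) + 1) * (kyD F y : ℝ) := by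
    exact_mod_cast hhi
  rw [abs_le]
  have hPy0 : 0 ≤ Py := by
    rw [hPy]
    exact Finset.prod_nonneg (fun p hp =>
      factor_nonneg F hF p (Nat.prime_of_mem_primesBelow hp))
  constructor
  · -- lower: (2R+1)Py - Ny ≤ C
    have key : (2*(R:ℝ)+1) * Py - (NyD y : ℝ)
        ≤ ((((2*R+1) / NyD y : ℕ)) : ℝ) * (kyD F y : ℝ) := by
      have hq2' : (2*(R:ℝ)+1) * Py ≤ (((((2*R+1) / NyD y : ℕ)) : ℝ) + 1) * (NyD y : ℝ) * Py := by
        apply mul_le_mul_of_nonneg_right _ hPy0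
        linarith
      have hstep : (((((2*R+1) / NyD y : ℕ)) : ℝ) + 1) * (NyD y : ℝ) * Py
          = ((((2*R+1) / NyD y : ℕ)) : ℝ) * (Py * (NyD y : ℝ)) + Py * (NyD y : ℝ) := by
        ring
      have hPN : Py * (NyD y : ℝ) ≤ (NyD y : ℝ) := by
        rw [← hkN] at *
        linarith
      rw [hstep, ← hkN] at hq2'
      have hnn : (0:ℝ) ≤ ((((2*R+1) / NyD y : ℕ)) : ℝ) := by positivity
      nlinarith
    linarith
  · -- upper: C ≤ (2R+1)Py + Ny
    have key : (((((2*R+1) / NyD y : ℕ)) : ℝ) + 1) * (kyD F y : ℝ)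
        ≤ (2*(R:ℝ)+1) * Py + (NyD y : ℝ) := by
      have h3 : ((((2*R+1) / NyD y : ℕ)) : ℝ) * (kyD F y : ℝ)
          ≤ ((2*(R:ℝ)+1) / (NyD y : ℝ)) * (kyD F y : ℝ) :=
        mul_le_mul_of_nonneg_right hq1 hky0
      have h4 : ((2*(R:ℝ)+1) / (NyD y : ℝ)) * (kyD F y : ℝ) = (2*(R:ℝ)+1) * Py := by
        rw [hkN]
        field_simp
      nlinarith
    linarith

end SPF

namespace SPF
variable (F : Finset ℤ)

lemma D_bound (y R M : ℕ) (hMle : ∀ x ∈ F, x.natAbs ≤ M) (hMR : M ≤ R) :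
    (((Finset.Icc (-(R:ℤ)) (R:ℤ)).filter
        (fun t : ℤ => (∀ p ∈ y.primesBelow, ¬ badp F p t)
          ∧ ¬(∀ x ∈ F, Squarefree (t + x)))).card : ℝ)
      ≤ (F.card : ℝ) + 2 * (2*(R:ℝ)+1) * (F.card : ℝ) * tailS y := by
  classical
  set badP : Finset ℕ :=
    (Nat.primesBelow (R+M+1)).filter (fun p => y ≤ p ∧ p*p ≤ R + M) with hbadP
  set Icc : Finset ℤ := Finset.Icc (-(R:ℤ)) (R:ℤ) with hIcc
  have hsub : Icc.filter
        (fun t : ℤ => (∀ p ∈ y.primesBelow, ¬ badp F p t)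
          ∧ ¬(∀ x ∈ F, Squarefree (t + x)))
      ⊆ (F.image (fun x : ℤ => -x))
        ∪ badP.biUnion (fun p => F.biUnion
            (fun x => Icc.filter (fun t : ℤ => ((p:ℤ))^2 ∣ t + x))) := by
    intro t ht
    rw [Finset.mem_filter] at ht
    obtain ⟨htI, hGy, hbad⟩ := ht
    push_neg at hbad
    obtain ⟨x, hx, hnsf⟩ := hbad
    rcases eq_or_ne (t + x) 0 with h0 | h0
    · apply Finset.mem_union_left
      rw [Finset.mem_image]
      exact ⟨x, hx, by omega⟩
    · apply Finset.mem_union_right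
      obtain ⟨p, hp, hdvd⟩ := exists_prime_sq_dvd hnsf
      have htR : |t| ≤ (R:ℤ) := by
        rw [hIcc, Finset.mem_Icc] at htI
        rw [abs_le]
        exact htI
      have hxM : |x| ≤ (M:ℤ) := by
        have := hMle x hx
        rw [Int.abs_eq_natAbs]
        exact_mod_cast this
      have habs : |t + x| ≤ (R:ℤ) + M :=
        le_trans (abs_add_le t x) (by omega)
      have hple : ((p:ℤ))^2 ≤ (R:ℤ) + M :=
        le_trans (Int.le_of_dvd (abs_pos.mpr h0) ((dvd_abs _ _).mpr hdvd)) habs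
      have hppn : p * p ≤ R + M := by
        have h2 : ((p:ℤ))^2 = ((p*p : ℕ) : ℤ) := by push_cast; ring
        rw [h2] at hple
        exact_mod_cast hple
      have hyp : y ≤ p := by
        by_contra hlt
        push_neg at hlt
        exact hGy p (Nat.mem_primesBelow.mpr ⟨hlt, hp⟩) ⟨x, hx, hdvd⟩
      have hmemb : p ∈ badP := by
        rw [hbadP, Finset.mem_filter, Nat.mem_primesBelow]
        have hppos := hp.pos
        refine ⟨⟨by nlinarith, hp⟩, hyp, hppn⟩
      rw [Finset.mem_biUnion]
      refine ⟨p, hmemb, ?_⟩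
      rw [Finset.mem_biUnion]
      exact ⟨x, hx, Finset.mem_filter.mpr ⟨htI, hdvd⟩⟩
  have hcard := Finset.card_le_card hsub
  have hcard2 : (Icc.filter
        (fun t : ℤ => (∀ p ∈ y.primesBelow, ¬ badp F p t)
          ∧ ¬(∀ x ∈ F, Squarefree (t + x)))).card
      ≤ F.card + ∑ p ∈ badP, ∑ x ∈ F,
          (Icc.filter (fun t : ℤ => ((p:ℤ))^2 ∣ t + x)).card := by
    refine le_trans hcard (le_trans (Finset.card_union_le _ _) ?_)
    have h1 : (F.image (fun x : ℤ => -x)).card ≤ F.card := Finset.card_image_le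
    have h2 := Finset.card_biUnion_le (s := badP)
      (t := fun p => F.biUnion (fun x => Icc.filter (fun t : ℤ => ((p:ℤ))^2 ∣ t + x)))
    have h3 : ∑ p ∈ badP, (F.biUnion
          (fun x => Icc.filter (fun t : ℤ => ((p:ℤ))^2 ∣ t + x))).card
        ≤ ∑ p ∈ badP, ∑ x ∈ F, (Icc.filter (fun t : ℤ => ((p:ℤ))^2 ∣ t + x)).card := by
      exact Finset.sum_le_sum (fun p _ => Finset.card_biUnion_le)
    omega
  -- real bound for inner counts
  have hinner : ∀ p ∈ badP, ∀ x : ℤ,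
      ((Icc.filter (fun t : ℤ => ((p:ℤ))^2 ∣ t + x)).card : ℝ)
        ≤ 2 * (2*(R:ℝ)+1) * (1/((p:ℕ):ℝ)^2) := by
    intro p hp x
    rw [hbadP, Finset.mem_filter, Nat.mem_primesBelow] at hp
    obtain ⟨⟨hplt, hprime⟩, hyp, hppm⟩ := hp
    have h1 := single_count F p hprime x R
    have hpp2 : p^2 = p*p := by ring
    have hp2le : p^2 ≤ 2*R+1 := by omega
    have hone : 1 ≤ (2*R+1)/(p^2) := by
      rw [Nat.le_div_iff_mul_le (by nlinarith [hprime.pos] : 0 < p^2)]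
      omega
    have h2 : (Icc.filter (fun t : ℤ => ((p:ℤ))^2 ∣ t + x)).card
        ≤ 2 * ((2*R+1)/(p^2)) := by
      rw [hIcc]
      omega
    have h3 : (((2*R+1)/(p^2) : ℕ) : ℝ) ≤ (2*(R:ℝ)+1) / ((p:ℕ):ℝ)^2 := by
      have h := Nat.cast_div_le (α := ℝ) (m := 2*R+1) (n := p^2)
      have heq : ((2*R+1 : ℕ) : ℝ) = 2*(R:ℝ)+1 := by push_cast; ring
      have heq2 : ((p^2 : ℕ) : ℝ) = ((p:ℕ):ℝ)^2 := by push_cast; ring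
      rwa [heq, heq2] at h
    calc ((Icc.filter (fun t : ℤ => ((p:ℤ))^2 ∣ t + x)).card : ℝ)
        ≤ ((2 * ((2*R+1)/(p^2)) : ℕ) : ℝ) := by exact_mod_cast h2
      _ = 2 * ((((2*R+1)/(p^2) : ℕ)) : ℝ) := by push_cast; ring
      _ ≤ 2 * ((2*(R:ℝ)+1) / ((p:ℕ):ℝ)^2) := by linarith
      _ = 2 * (2*(R:ℝ)+1) * (1/((p:ℕ):ℝ)^2) := by ring
  -- sum the inner bounds
  have hsum : ((∑ p ∈ badP, ∑ x ∈ F,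
        (Icc.filter (fun t : ℤ => ((p:ℤ))^2 ∣ t + x)).card : ℕ) : ℝ)
      ≤ 2 * (2*(R:ℝ)+1) * (F.card : ℝ) * tailS y := by
    rw [Nat.cast_sum]
    have hb1 : ∀ p ∈ badP, ((∑ x ∈ F,
          (Icc.filter (fun t : ℤ => ((p:ℤ))^2 ∣ t + x)).card : ℕ) : ℝ)
        ≤ (F.card : ℝ) * (2 * (2*(R:ℝ)+1) * (1/((p:ℕ):ℝ)^2)) := by
      intro p hp
      rw [Nat.cast_sum]
      calc ∑ x ∈ F, ((Icc.filter (fun t : ℤ => ((p:ℤ))^2 ∣ t + x)).card : ℝ)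
          ≤ ∑ _x ∈ F, 2 * (2*(R:ℝ)+1) * (1/((p:ℕ):ℝ)^2) :=
            Finset.sum_le_sum (fun x _ => hinner p hp x)
        _ = (F.card : ℝ) * (2 * (2*(R:ℝ)+1) * (1/((p:ℕ):ℝ)^2)) := by
            rw [Finset.sum_const, nsmul_eq_mul]
    calc ∑ p ∈ badP, ((∑ x ∈ F,
          (Icc.filter (fun t : ℤ => ((p:ℤ))^2 ∣ t + x)).card : ℕ) : ℝ)
        ≤ ∑ p ∈ badP, (F.card : ℝ) * (2 * (2*(R:ℝ)+1) * (1/((p:ℕ):ℝ)^2)) :=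
          Finset.sum_le_sum hb1
      _ = (F.card : ℝ) * (2 * (2*(R:ℝ)+1)) * ∑ p ∈ badP, (1/((p:ℕ):ℝ)^2) := by
          rw [Finset.mul_sum]
          apply Finset.sum_congr rfl
          intro p _
          ring
      _ ≤ (F.card : ℝ) * (2 * (2*(R:ℝ)+1)) * tailS y := by
          apply mul_le_mul_of_nonneg_left
          · apply sum_tail_bound
            intro p hp
            rw [hbadP, Finset.mem_filter] at hp
            exact hp.2.1
          · positivity
      _ = 2 * (2*(R:ℝ)+1) * (F.card : ℝ) * tailS y := by ring
  calc (((Icc.filter (fun t : ℤ => (∀ p ∈ y.primesBelow, ¬ badp F p t)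
          ∧ ¬(∀ x ∈ F, Squarefree (t + x)))).card : ℕ) : ℝ)
      ≤ ((F.card + ∑ p ∈ badP, ∑ x ∈ F,
          (Icc.filter (fun t : ℤ => ((p:ℤ))^2 ∣ t + x)).card : ℕ) : ℝ) := by
        exact_mod_cast hcard2
    _ = (F.card : ℝ) + ((∑ p ∈ badP, ∑ x ∈ F,
          (Icc.filter (fun t : ℤ => ((p:ℤ))^2 ∣ t + x)).card : ℕ) : ℝ) := by push_cast; ring
    _ ≤ (F.card : ℝ) + 2 * (2*(R:ℝ)+1) * (F.card : ℝ) * tailS y := by linarith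

end SPF

set_option maxHeartbeats 2000000 in
/-- The frequency (density) of translates t with t + F ⊆ S, for a finite
admissible set F, equals ∏_p (1 − |F mod p²|/p²) over all primes, and is
positive. -/
theorem squarefree_patch_frequency (F : Finset ℤ)
    (hF : ∀ p : ℕ, p.Prime →
      (F.image (fun x : ℤ => (x : ZMod (p ^ 2)))).card < p ^ 2) :
    Tendsto
      (fun R : ℕ =>
        (((Finset.Icc (-(R : ℤ)) (R : ℤ)).filter
            (fun t => ∀ x ∈ F, Squarefree (t + x))).card : ℝ) / (2 * R))
      atTop
      (nhds (∏' p : Nat.Primes,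
        (1 - ((F.image (fun x : ℤ => (x : ZMod ((p : ℕ) ^ 2)))).card : ℝ) / (p : ℕ) ^ 2))) ∧
    0 < ∏' p : Nat.Primes,
        (1 - ((F.image (fun x : ℤ => (x : ZMod ((p : ℕ) ^ 2)))).card : ℝ) / (p : ℕ) ^ 2) := by
  have hLrw : (∏' p : Nat.Primes,
      (1 - ((F.image (fun x : ℤ => (x : ZMod ((p : ℕ) ^ 2)))).card : ℝ) / (p : ℕ) ^ 2))
      = ∏' p : Nat.Primes, SPF.gP F p := rfl
  rw [hLrw]
  refine ⟨?_, SPF.tprod_pos F hF⟩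
  rw [Metric.tendsto_atTop]
  intro ε hε
  -- choose the prime cutoff y
  have h1 := SPF.prodBelow_tendsto F hF
  have h2 : Tendsto (fun y : ℕ => 4 * (F.card:ℝ) * SPF.tailS y) atTop (𝓝 0) := by
    have h3 := SPF.tail_tendsto.const_mul (4 * (F.card:ℝ))
    simpa using h3
  have e1 : ∀ᶠ y : ℕ in atTop,
      dist (∏ p ∈ y.primesBelow, (1 - (SPF.fF F p : ℝ) / ((p:ℕ) : ℝ)^2))
        (∏' p : Nat.Primes, SPF.gP F p) < ε/4 :=
    Metric.tendsto_nhds.mp h1 (ε/4) (by linarith)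
  have e2 : ∀ᶠ y : ℕ in atTop, dist (4 * (F.card:ℝ) * SPF.tailS y) 0 < ε/4 :=
    Metric.tendsto_nhds.mp h2 (ε/4) (by linarith)
  obtain ⟨y, hy1, hy2⟩ := (e1.and e2).exists
  rw [Real.dist_eq] at hy1
  rw [Real.dist_eq, sub_zero] at hy2
  have htail0 : 0 ≤ SPF.tailS y := SPF.tailS_nonneg y
  have hy2' : 4 * (F.card:ℝ) * SPF.tailS y < ε/4 := by
    have hc0 : (0:ℝ) ≤ 4 * (F.card:ℝ) * SPF.tailS y := by positivity
    rwa [abs_of_nonneg hc0] at hy2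
  -- constants
  set c : ℝ := (F.card : ℝ) with hc
  set Py : ℝ := ∏ p ∈ y.primesBelow, (1 - (SPF.fF F p : ℝ) / ((p:ℕ) : ℝ)^2) with hPydef
  set Lv : ℝ := ∏' p : Nat.Primes, SPF.gP F p with hLv
  set M : ℕ := F.sup (fun x => x.natAbs) with hM
  have hMle : ∀ x ∈ F, x.natAbs ≤ M := fun x hx => Finset.le_sup hx
  obtain ⟨R1, hR1⟩ := exists_nat_gt ((c + (SPF.NyD y : ℝ) + 1) * 2 / ε)
  refine ⟨max (max M 1) R1, ?_⟩
  intro R hR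
  have hMR : M ≤ R := le_trans (le_trans (le_max_left M 1) (le_max_left _ R1)) hR
  have hR1R : R1 ≤ R := le_trans (le_max_right _ _) hR
  have h1R : 1 ≤ R := le_trans (le_trans (le_max_right M 1) (le_max_left _ R1)) hR
  have hRr : (1:ℝ) ≤ (R:ℝ) := by exact_mod_cast h1R
  have hr2 : (0:ℝ) < 2 * (R:ℝ) := by linarith
  -- Py facts
  have hPy0 : 0 ≤ Py := by
    rw [hPydef]
    exact Finset.prod_nonneg (fun p hp =>
      SPF.factor_nonneg F hF p (Nat.prime_of_mem_primesBelow hp))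
  have hPy1 : Py ≤ 1 := by
    rw [hPydef]
    exact Finset.prod_le_one
      (fun p hp => SPF.factor_nonneg F hF p (Nat.prime_of_mem_primesBelow hp))
      (fun p hp => SPF.factor_le_one F p (Nat.prime_of_mem_primesBelow hp))
  -- the three counts
  have himp : ∀ t : ℤ, (∀ x ∈ F, Squarefree (t + x)) →
      ∀ p ∈ y.primesBelow, ¬ SPF.badp F p t := by
    intro t ht p hp hbad
    obtain ⟨x, hx, hdvd⟩ := hbad
    exact SPF.sqfree_imp (ht x hx) p (Nat.prime_of_mem_primesBelow hp) hdvd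
  have hsplit :
      ((Finset.Icc (-(R:ℤ)) (R:ℤ)).filter
        (fun t : ℤ => ∀ p ∈ y.primesBelow, ¬ SPF.badp F p t)).card
      = ((Finset.Icc (-(R:ℤ)) (R:ℤ)).filter
          (fun t : ℤ => ∀ x ∈ F, Squarefree (t + x))).card
        + ((Finset.Icc (-(R:ℤ)) (R:ℤ)).filter
            (fun t : ℤ => (∀ p ∈ y.primesBelow, ¬ SPF.badp F p t)
              ∧ ¬(∀ x ∈ F, Squarefree (t + x)))).card := by
    classical
    have h1 := Finset.card_filter_add_card_filter_not
      (s := (Finset.Icc (-(R:ℤ)) (R:ℤ)).filter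
        (fun t : ℤ => ∀ p ∈ y.primesBelow, ¬ SPF.badp F p t))
      (p := fun t : ℤ => ∀ x ∈ F, Squarefree (t + x))
    rw [Finset.filter_filter, Finset.filter_filter] at h1
    have h2 : ((Finset.Icc (-(R:ℤ)) (R:ℤ)).filter
          (fun t : ℤ => (∀ p ∈ y.primesBelow, ¬ SPF.badp F p t)
            ∧ (∀ x ∈ F, Squarefree (t + x)))).card
        = ((Finset.Icc (-(R:ℤ)) (R:ℤ)).filter
            (fun t : ℤ => ∀ x ∈ F, Squarefree (t + x))).card := by
      rw [Finset.filter_congr (fun t _ =>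
        (⟨fun h => h.2, fun h => ⟨himp t h, h⟩⟩ :
          ((∀ p ∈ y.primesBelow, ¬ SPF.badp F p t)
            ∧ (∀ x ∈ F, Squarefree (t + x))) ↔ (∀ x ∈ F, Squarefree (t + x))))]
    rw [SPF.fcard _ _ _ _, h2, SPF.fcard _ _ _ _] at h1
    omega
  have hC := SPF.C_bounds F hF y R
  have hD := SPF.D_bound F y R M hMle hMR
  rw [← hPydef] at hC
  rw [← hc] at hD
  -- assemble
  rw [Real.dist_eq]
  set A : ℕ := ((Finset.Icc (-(R:ℤ)) (R:ℤ)).filter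
      (fun t => ∀ x ∈ F, Squarefree (t + x))).card with hA
  set C : ℕ := ((Finset.Icc (-(R:ℤ)) (R:ℤ)).filter
      (fun t : ℤ => ∀ p ∈ y.primesBelow, ¬ SPF.badp F p t)).card with hCdef
  set D : ℕ := ((Finset.Icc (-(R:ℤ)) (R:ℤ)).filter
      (fun t : ℤ => (∀ p ∈ y.primesBelow, ¬ SPF.badp F p t)
        ∧ ¬(∀ x ∈ F, Squarefree (t + x)))).card with hDdef
  have hsplit' : (C:ℝ) = (A:ℝ) + (D:ℝ) := by exact_mod_cast hsplit
  rw [abs_le] at hC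
  -- numeric facts
  set r2 : ℝ := 2 * (R:ℝ) with hr2def
  have hNy0 : (0:ℝ) < (SPF.NyD y : ℝ) := by exact_mod_cast SPF.NyD_pos y
  have hc0 : (0:ℝ) ≤ c := by rw [hc]; positivity
  have hstar : c + (SPF.NyD y : ℝ) + 1 < ε * r2 / 4 := by
    have h4 : (c + (SPF.NyD y : ℝ) + 1) * 2 / ε < (R1:ℝ) := hR1
    have h5 : (R1:ℝ) ≤ (R:ℝ) := by exact_mod_cast hR1R
    rw [div_lt_iff₀ hε] at h4
    rw [hr2def]
    nlinarith
  rw [abs_lt] at hy1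
  obtain ⟨hy1l, hy1u⟩ := hy1
  -- bounds on A
  have hAub : (A:ℝ) ≤ (r2+1) * Py + (SPF.NyD y : ℝ) := by
    have hD0 : (0:ℝ) ≤ (D:ℝ) := by positivity
    linarith [hC.2]
  have hAlb : (r2+1) * Py - (SPF.NyD y : ℝ) - (c + 2 * (r2+1) * c * SPF.tailS y)
      ≤ (A:ℝ) := by
    linarith [hC.1]
  -- final computation
  have hgoal : |(A:ℝ) / r2 - Lv| < ε := by
    rw [abs_lt]
    have hLv0 : 0 ≤ Lv := by
      have := SPF.tprod_pos F hF
      rw [← hLv] at this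
      linarith
    have hm1 : r2 * Py ≤ r2 * (Lv + ε/4) := by
      apply mul_le_mul_of_nonneg_left _ hr2.le
      linarith
    have hm2 : r2 * (Lv - ε/4) ≤ r2 * Py := by
      apply mul_le_mul_of_nonneg_left _ hr2.le
      linarith
    have hct0 : 0 ≤ c * SPF.tailS y := by positivity
    have hm3 : 2 * (r2+1) * (c * SPF.tailS y) ≤ 4 * r2 * (c * SPF.tailS y) := by
      apply mul_le_mul_of_nonneg_right _ hct0
      linarith
    have hm4 : r2 * (4 * c * SPF.tailS y) ≤ r2 * (ε/4) := by
      apply mul_le_mul_of_nonneg_left _ hr2.le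
      linarith
    have hale : ((A:ℝ)/r2) * r2 = (A:ℝ) := by field_simp
    constructor
    · have hlow : r2 * (Lv - 3*ε/4) < ((A:ℝ)/r2) * r2 := by
        rw [hale]
        linarith [hAlb, hm2, hm3, hm4, hstar, hc0, hPy0, htail0]
      have h6 : (Lv - 3*ε/4) * r2 < ((A:ℝ)/r2) * r2 := by linarith
      have h7 := (mul_lt_mul_iff_left₀ hr2).mp h6
      linarith
    · have hupp : ((A:ℝ)/r2) * r2 < r2 * (Lv + ε/2) := by
        rw [hale]
        linarith [hAub, hm1, hPy1, hstar, hc0]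
      have h6 : ((A:ℝ)/r2) * r2 < (Lv + ε/2) * r2 := by linarith
      have h7 := (mul_lt_mul_iff_left₀ hr2).mp h6
      linarith
  exact hgoal
end
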